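/- arXiv:1601.03199 — 7 statements merged into one kernel-verified Lean document; each statement's English description precedes it below -/
import Mathlib

section
/- Let K > 1 and let r > 0 satisfy the transcendental equation r = Ψ(2Kr), where Ψ(x) = I₁(x)/I₀(x). Then r > √(1 − 1/K). -/
open Real Filter Topology

/-- The modified Bessel function of the first kind of real order `ν`. -/
noncomputable def besselI (ν x : ℝ) : ℝ :=
  ∑' m : ℕ, (x / 2) ^ (2 * (m : ℝ) + ν) / ((m.factorial : ℝ) * Real.Gamma ((m : ℝ) + ν + 1))

/-- `Ψ_ν(x) = I_{ν+1}(x) / I_ν(x)`. -/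
noncomputable def psi (ν x : ℝ) : ℝ := besselI (ν + 1) x / besselI ν x

/-- Auxiliary entire series: `S k u = ∑ u^m / (m! (m+k)!)`, so that
`besselI k x = (x/2)^k * S k ((x/2)^2)` for natural `k`. -/
noncomputable def S (k : ℕ) (u : ℝ) : ℝ :=
  ∑' m : ℕ, u ^ m / ((m.factorial : ℝ) * ((m + k).factorial : ℝ))

lemma S_summable (k : ℕ) {u : ℝ} (hu : 0 ≤ u) :
    Summable (fun m : ℕ => u ^ m / ((m.factorial : ℝ) * ((m + k).factorial : ℝ))) := by
  apply Summable.of_nonneg_of_le (fun m => by positivity)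
    (fun m => ?_) (Real.summable_pow_div_factorial u)
  rw [div_le_div_iff₀ (by positivity) (by positivity)]
  have h1 : (1 : ℝ) ≤ ((m + k).factorial : ℝ) := by
    exact_mod_cast Nat.one_le_iff_ne_zero.mpr (Nat.factorial_ne_zero (m+k))
  nlinarith [mul_le_mul_of_nonneg_left h1 (show (0:ℝ) ≤ u ^ m * (m.factorial : ℝ) by positivity)]

lemma S_pos (k : ℕ) {u : ℝ} (hu : 0 ≤ u) : 0 < S k u := by
  apply Summable.tsum_pos (S_summable k hu) (fun m => by positivity) 0
  positivity

lemma besselI_eq (k : ℕ) {x : ℝ} (hx : 0 < x) :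
    besselI k x = (x / 2) ^ k * S k ((x / 2) ^ 2) := by
  unfold besselI S
  rw [← tsum_mul_left]
  congr 1; funext m
  have ht : (0:ℝ) < x / 2 := by linarith
  have h1 : (x / 2) ^ (2 * (m : ℝ) + (k:ℝ)) = (x / 2) ^ (2 * m + k : ℕ) := by
    rw [← Real.rpow_natCast (x/2) (2*m+k)]
    congr 1
    push_cast; ring
  have h2 : Real.Gamma ((m : ℝ) + (k:ℝ) + 1) = ((m + k).factorial : ℝ) := by
    rw [show (m : ℝ) + (k:ℝ) + 1 = ((m + k : ℕ) : ℝ) + 1 by push_cast; ring,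
      Real.Gamma_nat_eq_factorial]
  rw [h1, h2, pow_add, pow_mul]
  ring

lemma S_rec {u : ℝ} (hu : 0 ≤ u) : S 0 u = u * S 2 u + S 1 u := by
  set f : ℕ → ℝ := fun m => u ^ m * m / ((m.factorial : ℝ) * ((m + 1).factorial : ℝ)) with hfdef
  have key : ∀ m : ℕ, u ^ m / ((m.factorial : ℝ) * ((m + 0).factorial : ℝ))
      - u ^ m / ((m.factorial : ℝ) * ((m + 1).factorial : ℝ)) = f m := by
    intro m
    have h : ((m + 1).factorial : ℝ) = (m + 1) * m.factorial := by
      exact_mod_cast Nat.factorial_succ m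
    have h0 : (m.factorial : ℝ) ≠ 0 := by positivity
    simp only [hfdef, Nat.add_zero, h]
    field_simp
    ring
  have hf : Summable f := by
    rw [show f = fun m => (u ^ m / ((m.factorial : ℝ) * ((m + 0).factorial : ℝ))
      - u ^ m / ((m.factorial : ℝ) * ((m + 1).factorial : ℝ))) from funext fun m => (key m).symm]
    exact (S_summable 0 hu).sub (S_summable 1 hu)
  have h1 : S 0 u - S 1 u = ∑' m, f m := by
    unfold S
    rw [← Summable.tsum_sub (S_summable 0 hu) (S_summable 1 hu)]
    exact tsum_congr key
  have h3 : ∀ m : ℕ, f (m + 1) = u * (u ^ m / ((m.factorial : ℝ) * ((m + 2).factorial : ℝ))) := by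
    intro m
    have h : ((m + 1).factorial : ℝ) = (m + 1) * m.factorial := by
      exact_mod_cast Nat.factorial_succ m
    have h0 : (m.factorial : ℝ) ≠ 0 := by positivity
    have h2 : ((m + 2).factorial : ℝ) ≠ 0 := by positivity
    have hm1 : ((m : ℝ) + 1) ≠ 0 := by positivity
    simp only [hfdef]
    push_cast [h]
    field_simp
    ring
  have h2 : ∑' m, f m = u * S 2 u := by
    rw [Summable.tsum_eq_zero_add hf]
    simp only [hfdef]
    norm_num
    rw [show (fun m : ℕ => u ^ (m+1) * (↑m+1) / ((m+1).factorial * ((m + 2).factorial : ℝ)))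
        = fun m : ℕ => u * (u ^ m / ((m.factorial : ℝ) * ((m + 2).factorial : ℝ)))
      from funext fun m => by simpa [hfdef] using h3 m]
    rw [tsum_mul_left]
    rfl
  linarith [h1, h2]

lemma nat_ineq (n : ℕ) :
    ∑ m ∈ Finset.range (n+1), n.choose m * (n+2).choose m
      ≤ ∑ m ∈ Finset.range (n+1), n.choose m * (n+2).choose (m+1) := by
  have hsub1 : Finset.range (n+1) ⊆ Finset.range (n+2+1) := Finset.range_subset_range.mpr (by omega)
  have hsub2 : Finset.range (n+1) ⊆ Finset.range (n+1+1) := Finset.range_subset_range.mpr (by omega)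
  have hL : ∑ m ∈ Finset.range (n+1), n.choose m * (n+2).choose m
      = (2*n+2).choose (n+2) := by
    have hv := Nat.add_choose_eq n (n+2) (n+2)
    rw [Finset.Nat.sum_antidiagonal_eq_sum_range_succ_mk,
      show n + (n+2) = 2*n+2 by ring] at hv
    rw [hv]
    rw [← Finset.sum_subset hsub1 (fun m _ hnm => by
      have : n < m := by simpa [Finset.mem_range] using fun h => hnm (Finset.mem_range.mpr h)
      simp [Nat.choose_eq_zero_of_lt this])]
    apply Finset.sum_congr rfl
    intro m hm
    have hm' : m ≤ n := by simpa [Nat.lt_succ_iff] using Finset.mem_range.mp hm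
    rw [Nat.choose_symm (by omega : m ≤ n + 2)]
  have hR : ∑ m ∈ Finset.range (n+1), n.choose m * (n+2).choose (m+1)
      = (2*n+2).choose (n+1) := by
    have hv := Nat.add_choose_eq n (n+2) (n+1)
    rw [Finset.Nat.sum_antidiagonal_eq_sum_range_succ_mk,
      show n + (n+2) = 2*n+2 by ring] at hv
    rw [hv]
    rw [← Finset.sum_subset hsub2 (fun m _ hnm => by
      have : n < m := by simpa [Finset.mem_range] using fun h => hnm (Finset.mem_range.mpr h)
      simp [Nat.choose_eq_zero_of_lt this])]
    apply Finset.sum_congr rfl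
    intro m hm
    have hm' : m ≤ n := by simpa [Nat.lt_succ_iff] using Finset.mem_range.mp hm
    have : (n+1) - m = (n+2) - (m+1) := by omega
    rw [this, Nat.choose_symm (by omega : m + 1 ≤ n + 2)]
  rw [hL, hR]
  have := Nat.choose_le_middle (n+2) (2*n+2)
  rwa [show (2*n+2)/2 = n+1 by omega] at this

lemma term1 (n m : ℕ) (hm : m ≤ n) :
    (1:ℝ) / ((m.factorial:ℝ) * (m+1).factorial * (n-m).factorial * ((n-m)+1).factorial)
      = ((n.choose m * (n+2).choose (m+1) : ℕ) : ℝ) / ((n.factorial:ℝ) * (n+2).factorial) := by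
  have e1 := Nat.choose_mul_factorial_mul_factorial hm
  have e2 := Nat.choose_mul_factorial_mul_factorial (show m+1 ≤ n+2 by omega)
  rw [show (n+2) - (m+1) = (n-m)+1 by omega] at e2
  have E1 : ((n.choose m : ℝ)) * m.factorial * (n-m).factorial = n.factorial := by
    exact_mod_cast e1
  have E2 : (((n+2).choose (m+1) : ℝ)) * (m+1).factorial * ((n-m)+1).factorial
      = (n+2).factorial := by exact_mod_cast e2
  rw [div_eq_div_iff (by positivity) (by positivity)]
  push_cast
  rw [← E1, ← E2]
  ring

lemma term0 (n m : ℕ) (hm : m ≤ n) :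
    (1:ℝ) / ((m.factorial:ℝ) * (m+0).factorial * (n-m).factorial * ((n-m)+2).factorial)
      = ((n.choose m * (n+2).choose m : ℕ) : ℝ) / ((n.factorial:ℝ) * (n+2).factorial) := by
  have e1 := Nat.choose_mul_factorial_mul_factorial hm
  have e2 := Nat.choose_mul_factorial_mul_factorial (show m ≤ n+2 by omega)
  rw [show (n+2) - m = (n-m)+2 by omega] at e2
  have E1 : ((n.choose m : ℝ)) * m.factorial * (n-m).factorial = n.factorial := by
    exact_mod_cast e1
  have E2 : (((n+2).choose m : ℝ)) * m.factorial * ((n-m)+2).factorial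
      = (n+2).factorial := by exact_mod_cast e2
  rw [div_eq_div_iff (by positivity) (by positivity)]
  push_cast
  rw [← E1, ← E2]
  ring

lemma coeff_le (n : ℕ) :
    ∑ m ∈ Finset.range (n+1),
        (1:ℝ) / ((m.factorial:ℝ) * (m+0).factorial * (n-m).factorial * ((n-m)+2).factorial)
      ≤ ∑ m ∈ Finset.range (n+1),
        (1:ℝ) / ((m.factorial:ℝ) * (m+1).factorial * (n-m).factorial * ((n-m)+1).factorial) := by
  rw [Finset.sum_congr rfl
      (fun m hm => term0 n m (by simpa [Nat.lt_succ_iff] using Finset.mem_range.mp hm)),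
    Finset.sum_congr rfl
      (fun m hm => term1 n m (by simpa [Nat.lt_succ_iff] using Finset.mem_range.mp hm)),
    ← Finset.sum_div, ← Finset.sum_div]
  rw [div_le_div_iff_of_pos_right (by positivity)]
  exact_mod_cast nat_ineq n

lemma turan {u : ℝ} (hu : 0 < u) : S 0 u * S 2 u < S 1 u ^ 2 := by
  set F : ℕ → ℕ → ℝ := fun k m => u ^ m / ((m.factorial : ℝ) * ((m + k).factorial : ℝ)) with hF
  have hnorm : ∀ k, Summable (fun m : ℕ => ‖F k m‖) := fun k => by
    refine (S_summable k hu.le).congr fun m => ?_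
    rw [Real.norm_eq_abs, abs_of_nonneg (by positivity)]
  have c11 := tsum_mul_tsum_eq_tsum_sum_range_of_summable_norm (hnorm 1) (hnorm 1)
  have c02 := tsum_mul_tsum_eq_tsum_sum_range_of_summable_norm (hnorm 0) (hnorm 2)
  have s11 : Summable (fun n => ∑ m ∈ Finset.range (n+1), F 1 m * F 1 (n-m)) :=
    (summable_norm_sum_mul_range_of_summable_norm (hnorm 1) (hnorm 1)).of_norm
  have s02 : Summable (fun n => ∑ m ∈ Finset.range (n+1), F 0 m * F 2 (n-m)) :=
    (summable_norm_sum_mul_range_of_summable_norm (hnorm 0) (hnorm 2)).of_norm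
  have hprod : ∀ (i j n m : ℕ), m ≤ n → F i m * F j (n-m)
      = u ^ n * ((1:ℝ) / ((m.factorial:ℝ) * (m+i).factorial * (n-m).factorial
          * ((n-m)+j).factorial)) := by
    intro i j n m hm
    simp only [hF]
    rw [div_mul_div_comm, ← pow_add, Nat.add_sub_cancel' hm]
    ring
  have hdiff : 0 < S 1 u ^ 2 - S 0 u * S 2 u := by
    have e1 : S 1 u ^ 2 = ∑' n, ∑ m ∈ Finset.range (n+1), F 1 m * F 1 (n-m) := by
      rw [pow_two]; exact c11
    have e2 : S 0 u * S 2 u = ∑' n, ∑ m ∈ Finset.range (n+1), F 0 m * F 2 (n-m) := c02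
    rw [e1, e2, ← Summable.tsum_sub s11 s02]
    apply Summable.tsum_pos (s11.sub s02) (fun n => ?_) 0
    · -- positivity at n = 0
      rw [sub_pos]
      norm_num [hF, Nat.factorial]
    · -- nonnegativity
      rw [sub_nonneg,
        Finset.sum_congr rfl (fun m hm =>
          hprod 1 1 n m (by simpa [Nat.lt_succ_iff] using Finset.mem_range.mp hm)),
        Finset.sum_congr rfl (fun m hm =>
          hprod 0 2 n m (by simpa [Nat.lt_succ_iff] using Finset.mem_range.mp hm)),
        ← Finset.mul_sum, ← Finset.mul_sum]
      exact mul_le_mul_of_nonneg_left (coeff_le n) (by positivity)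
  nlinarith [hdiff]

theorem stmt_0 (K r : ℝ) (hK : 1 < K) (hr : 0 < r)
    (heq : r = psi 0 (2 * K * r)) :
    Real.sqrt (1 - 1 / K) < r := by
  have hK0 : (0:ℝ) < K := by linarith
  have hx : (0:ℝ) < 2 * K * r := by positivity
  have hhalf : (2 * K * r) / 2 = K * r := by ring
  set u : ℝ := (K * r) ^ 2 with hudef
  have hu : 0 < u := by positivity
  have hb0 : besselI 0 (2 * K * r) = S 0 u := by
    have := besselI_eq 0 hx
    simpa [hhalf] using this
  have hb1 : besselI 1 (2 * K * r) = (K * r) * S 1 u := by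
    have := besselI_eq 1 hx
    simpa [hhalf] using this
  have hS0 : 0 < S 0 u := S_pos 0 hu.le
  have hS1 : 0 < S 1 u := S_pos 1 hu.le
  rw [psi, zero_add, hb0, hb1] at heq
  have hKS : S 0 u = K * S 1 u := by
    field_simp at heq
    have : r * S 0 u = K * r * S 1 u := by rw [heq]; ring
    have hr' : r ≠ 0 := ne_of_gt hr
    field_simp at this ⊢
    nlinarith [this]
  have hrec := S_rec hu.le
  have htu := turan hu
  have hS2eq : u * S 2 u = S 0 u - S 1 u := by linarith
  have h3 : S 0 u * (S 0 u - S 1 u) < u * S 1 u ^ 2 := by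
    have h := mul_lt_mul_of_pos_left htu hu
    calc S 0 u * (S 0 u - S 1 u) = u * (S 0 u * S 2 u) := by rw [← hS2eq]; ring
      _ < u * S 1 u ^ 2 := h
  rw [hKS] at h3
  have h4 : K * (K - 1) < u := by nlinarith [h3, hS1, mul_pos hS1 hS1]
  have hr2 : 1 - 1 / K < r ^ 2 := by
    rw [show (1:ℝ) - 1 / K = (K * (K - 1)) / (K * K) by field_simp,
      div_lt_iff₀ (by positivity)]
    nlinarith [h4]
  exact (Real.sqrt_lt' hr).mpr hr2
end

section
/- For all x > 0 one has Ψ²(x) + Ψ(x)/x − 1 < 0, where Ψ(x) = I₁(x)/I₀(x). Consequently, if K > 1 and r > 0 satisfies r = Ψ(2Kr), then r < √(1 − 1/(2K)). -/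
open Real Filter Topology

open Finset Nat

lemma van1 (k : ℕ) : ∑ p ∈ Finset.HasAntidiagonal.antidiagonal k, k.choose p.1 * k.choose p.2
    = (2*k).choose k := by
  rw [two_mul]; exact (Nat.add_choose_eq k k k).symm

lemma van2 (k : ℕ) : ∑ p ∈ Finset.HasAntidiagonal.antidiagonal k, k.choose p.1 * (k+1).choose p.1
    = (2*k+1).choose (k+1) := by
  have h := Nat.add_choose_eq k (k+1) (k+1)
  rw [Finset.Nat.sum_antidiagonal_eq_sum_range_succ_mk] at h
  rw [Finset.Nat.sum_antidiagonal_eq_sum_range_succ_mk]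
  rw [show (k+1).succ = (k+1)+1 from rfl, Finset.sum_range_succ, Nat.choose_succ_self] at h
  simp only [zero_mul, add_zero] at h
  rw [show k + (k+1) = 2*k+1 by ring] at h
  rw [h]
  apply Finset.sum_congr rfl
  intro i hi
  have hik : i ≤ k := by simpa [Nat.lt_succ_iff] using hi
  congr 1
  rw [show k + 1 - i = (k+1) - i from rfl, Nat.choose_symm (by omega)]

lemma van3 (n : ℕ) : ∑ p ∈ Finset.HasAntidiagonal.antidiagonal n, (n+1).choose (p.1+1) * (n+1).choose p.1
    = (2*n+2).choose n := by
  have h := Nat.add_choose_eq (n+1) (n+1) n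
  rw [show (n+1)+(n+1) = 2*n+2 by ring] at h
  rw [h]
  apply Finset.sum_congr rfl
  intro p hp
  have hp' : p.1 + p.2 = n := Finset.HasAntidiagonal.mem_antidiagonal.mp hp
  have h2 : (n+1).choose p.2 = (n+1).choose (p.1+1) := by
    rw [← Nat.choose_symm (show p.2 ≤ n+1 by omega)]
    congr 1; omega
  rw [h2]; ring

lemma combN (n : ℕ) : 2*(n+2) * ((2*n+2).choose n) + (2*n+3).choose (n+2)
    ≤ 2*(n+2) * ((2*n+2).choose (n+1)) := by
  have f1 := Nat.choose_succ_right_eq (2*n+2) n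
  rw [show 2*n+2-n = n+2 by omega] at f1
  have f2 : (2*n+3).choose (n+2) = (2*n+2).choose (n+1) + (2*n+2).choose (n+2) := by
    have := Nat.choose_succ_succ (2*n+2) (n+1)
    simpa [show (2*n+2).succ = 2*n+3 by omega] using this
  have f3 : (2*n+2).choose (n+2) ≤ (2*n+2).choose (n+1) := by
    have := Nat.choose_le_middle (n+2) (2*n+2)
    rwa [show (2*n+2)/2 = n+1 by omega] at this
  linarith [f1, f2, f3]

noncomputable def Ac (k : ℕ) : ℝ :=
  ∑ p ∈ Finset.HasAntidiagonal.antidiagonal k,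
    1 / (((p.1)! * (p.1)! : ℝ) * ((p.2)! * (p.2)!))

noncomputable def Bc (k : ℕ) : ℝ :=
  ∑ p ∈ Finset.HasAntidiagonal.antidiagonal k,
    1 / (((p.1)! * (p.1+1)! : ℝ) * ((p.2)! * (p.2+1)!))

noncomputable def Cc (k : ℕ) : ℝ :=
  ∑ p ∈ Finset.HasAntidiagonal.antidiagonal k,
    1 / (((p.1)! * (p.1)! : ℝ) * ((p.2)! * (p.2+1)!))

lemma cast_cf {i j k : ℕ} (h : i + j = k) :
    ((k.choose i : ℝ)) * ((i)! * (j)!) = (k)! := by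
  have h1 : i ≤ k := by omega
  have h2 := Nat.choose_mul_factorial_mul_factorial h1
  rw [show k - i = j by omega] at h2
  have := congrArg (Nat.cast : ℕ → ℝ) h2
  push_cast at this
  linear_combination this

lemma Ac_eq (k : ℕ) : Ac k = ((2*k).choose k : ℝ) / ((k)! * (k)!) := by
  unfold Ac
  rw [← van1, Nat.cast_sum, Finset.sum_div]
  apply Finset.sum_congr rfl
  intro p hp
  have hp' : p.1 + p.2 = k := Finset.HasAntidiagonal.mem_antidiagonal.mp hp
  have h1 := cast_cf hp'
  have h2 := cast_cf (show p.2 + p.1 = k by omega)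
  have d1 : (0:ℝ) < ((p.1)! * (p.1)! : ℝ) * ((p.2)! * (p.2)!) := by positivity
  have d2 : (0:ℝ) < ((k)! * (k)! : ℝ) := by positivity
  rw [div_eq_div_iff d1.ne' d2.ne']
  push_cast
  nlinarith [h1, h2]

lemma Bc_eq (n : ℕ) : Bc n = ((2*n+2).choose n : ℝ) / ((n+1)! * (n+1)!) := by
  unfold Bc
  rw [← van3, Nat.cast_sum, Finset.sum_div]
  apply Finset.sum_congr rfl
  intro p hp
  have hp' : p.1 + p.2 = n := Finset.HasAntidiagonal.mem_antidiagonal.mp hp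
  have h1 := cast_cf (show (p.1+1) + p.2 = n+1 by omega)
  have h2 := cast_cf (show p.1 + (p.2+1) = n+1 by omega)
  have d1 : (0:ℝ) < ((p.1)! * (p.1+1)! : ℝ) * ((p.2)! * (p.2+1)!) := by positivity
  have d2 : (0:ℝ) < ((n+1)! * (n+1)! : ℝ) := by positivity
  rw [div_eq_div_iff d1.ne' d2.ne']
  push_cast
  nlinarith [h1, h2]

lemma Cc_eq (k : ℕ) : Cc k = ((2*k+1).choose (k+1) : ℝ) / ((k)! * (k+1)!) := by
  unfold Cc
  rw [← van2, Nat.cast_sum, Finset.sum_div]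
  apply Finset.sum_congr rfl
  intro p hp
  have hp' : p.1 + p.2 = k := Finset.HasAntidiagonal.mem_antidiagonal.mp hp
  have h1 := cast_cf hp'
  have h2 := cast_cf (show p.1 + (p.2+1) = k+1 by omega)
  have d1 : (0:ℝ) < ((p.1)! * (p.1)! : ℝ) * ((p.2)! * (p.2+1)!) := by positivity
  have d2 : (0:ℝ) < ((k)! * (k+1)! : ℝ) := by positivity
  rw [div_eq_div_iff d1.ne' d2.ne']
  push_cast
  nlinarith [h1, h2]

lemma van1' (k : ℕ) : True := trivial

lemma comb (n : ℕ) : Bc n + Cc (n+1) / 2 ≤ Ac (n+1) := by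
  rw [Bc_eq, Cc_eq, Ac_eq]
  rw [show 2*(n+1)+1 = 2*n+3 by ring, show 2*(n+1) = 2*n+2 by ring]
  have key : ((2*(n+2)) * ((2*n+2).choose n) + (2*n+3).choose (n+2) : ℝ)
      ≤ (2*(n+2)) * ((2*n+2).choose (n+1)) := by exact_mod_cast combN n
  have hD : (0:ℝ) < ((n+1)! : ℝ) := by positivity
  have hE : ((n+1+1)! : ℝ) = (n+2) * ((n+1)! : ℝ) := by
    rw [show n+1+1 = (n+1)+1 from rfl, Nat.factorial_succ]; push_cast; ring
  rw [hE, div_div]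
  rw [div_add_div _ _ (by positivity) (by positivity),
    div_le_div_iff₀ (by positivity) (by positivity)]
  nlinarith [mul_le_mul_of_nonneg_right key (pow_pos hD 4).le, hD]


lemma I0_eq (x : ℝ) : besselI 0 x = ∑' m : ℕ, (x/2)^(2*m) / (((m)! : ℝ) * (m)!) := by
  unfold besselI
  apply tsum_congr; intro m
  rw [show (2*(m:ℝ)+0) = ((2*m : ℕ) : ℝ) by push_cast; ring, Real.rpow_natCast]
  rw [show (m:ℝ)+0+1 = (m:ℝ)+1 by ring, Real.Gamma_nat_eq_factorial]

lemma I1_eq (x : ℝ) : besselI 1 x = ∑' m : ℕ, (x/2)^(2*m+1) / (((m)! : ℝ) * ((m+1))!) := by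
  unfold besselI
  apply tsum_congr; intro m
  rw [show (2*(m:ℝ)+1) = ((2*m+1 : ℕ) : ℝ) by push_cast; ring, Real.rpow_natCast]
  rw [show (m:ℝ)+1+1 = ((m+1 : ℕ):ℝ)+1 by push_cast; ring, Real.Gamma_nat_eq_factorial]

lemma sumf (y : ℝ) : Summable (fun m : ℕ => y^(2*m) / (((m)! : ℝ) * (m)!)) := by
  apply Summable.of_nonneg_of_le (fun m => by rw [pow_mul]; positivity) (fun m => ?_)
    (Real.summable_pow_div_factorial (y^2))
  rw [pow_mul]
  have h1 : (1:ℝ) ≤ ((m)! : ℝ) := by exact_mod_cast Nat.one_le_iff_ne_zero.mpr (Nat.factorial_ne_zero m)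
  apply div_le_div_of_nonneg_left (by positivity) (by positivity)
  nlinarith

lemma sumg {y : ℝ} (hy : 0 ≤ y) :
    Summable (fun m : ℕ => y^(2*m+1) / (((m)! : ℝ) * ((m+1))!)) := by
  apply Summable.of_nonneg_of_le (fun m => by positivity) (fun m => ?_)
    ((Real.summable_pow_div_factorial (y^2)).mul_left y)
  rw [pow_succ, pow_mul, mul_comm ((y^2)^m) y, mul_div_assoc]
  apply mul_le_mul_of_nonneg_left ?_ hy
  have h1 : (1:ℝ) ≤ (((m+1))! : ℝ) := by
    exact_mod_cast Nat.one_le_iff_ne_zero.mpr (Nat.factorial_ne_zero (m+1))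
  have h2 : (0:ℝ) < ((m)! : ℝ) := by positivity
  apply div_le_div_of_nonneg_left (by positivity) (by positivity)
  nlinarith

lemma Ac_nonneg (k : ℕ) : 0 ≤ Ac k := by unfold Ac; positivity
lemma Bc_nonneg (k : ℕ) : 0 ≤ Bc k := by unfold Bc; positivity
lemma Cc_nonneg (k : ℕ) : 0 ≤ Cc k := by unfold Cc; positivity

lemma Ac_zero : Ac 0 = 1 := by simp [Ac, Nat.factorial]
lemma Cc_zero : Cc 0 = 1 := by simp [Cc, Nat.factorial]

lemma key_sum {y : ℝ} (hy : 0 < y) :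
    (∑' m : ℕ, y^(2*m+1) / (((m)! : ℝ) * ((m+1))!))^2
      + (∑' m : ℕ, y^(2*m) / (((m)! : ℝ) * (m)!))
        * (∑' m : ℕ, y^(2*m+1) / (((m)! : ℝ) * ((m+1))!)) / (2*y)
      < (∑' m : ℕ, y^(2*m) / (((m)! : ℝ) * (m)!))^2 := by
  have hfs := sumf y
  have hgs := sumg hy.le
  have hfn : Summable (fun m : ℕ => ‖y^(2*m) / (((m)! : ℝ) * (m)!)‖) :=
    hfs.congr fun m => (Real.norm_of_nonneg (by rw [pow_mul]; positivity)).symm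
  have hgn : Summable (fun m : ℕ => ‖y^(2*m+1) / (((m)! : ℝ) * ((m+1))!)‖) :=
    hgs.congr fun m => (Real.norm_of_nonneg (by positivity)).symm
  have E00 : ∀ n : ℕ, (∑ p ∈ Finset.HasAntidiagonal.antidiagonal n,
      (y^(2*p.1) / (((p.1)! : ℝ) * (p.1)!)) * (y^(2*p.2) / (((p.2)! : ℝ) * (p.2)!)))
      = y^(2*n) * Ac n := by
    intro n; rw [Ac, Finset.mul_sum]
    apply Finset.sum_congr rfl
    intro p hp
    have hp' := Finset.HasAntidiagonal.mem_antidiagonal.mp hp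
    rw [_root_.div_mul_div_comm, ← pow_add, show 2*p.1 + (2*p.2) = 2*n by omega, mul_one_div]
  have E11 : ∀ n : ℕ, (∑ p ∈ Finset.HasAntidiagonal.antidiagonal n,
      (y^(2*p.1+1) / (((p.1)! : ℝ) * ((p.1+1))!)) * (y^(2*p.2+1) / (((p.2)! : ℝ) * ((p.2+1))!)))
      = y^(2*n+2) * Bc n := by
    intro n; rw [Bc, Finset.mul_sum]
    apply Finset.sum_congr rfl
    intro p hp
    have hp' := Finset.HasAntidiagonal.mem_antidiagonal.mp hp
    rw [_root_.div_mul_div_comm, ← pow_add, show 2*p.1+1 + (2*p.2+1) = 2*n+2 by omega, mul_one_div]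
  have E01 : ∀ n : ℕ, (∑ p ∈ Finset.HasAntidiagonal.antidiagonal n,
      (y^(2*p.1) / (((p.1)! : ℝ) * (p.1)!)) * (y^(2*p.2+1) / (((p.2)! : ℝ) * ((p.2+1))!)))
      = y^(2*n+1) * Cc n := by
    intro n; rw [Cc, Finset.mul_sum]
    apply Finset.sum_congr rfl
    intro p hp
    have hp' := Finset.HasAntidiagonal.mem_antidiagonal.mp hp
    rw [_root_.div_mul_div_comm, ← pow_add, show 2*p.1 + (2*p.2+1) = 2*n+1 by omega, mul_one_div]
  have R : (∑' m : ℕ, y^(2*m) / (((m)! : ℝ) * (m)!))^2 = ∑' n : ℕ, y^(2*n) * Ac n := by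
    rw [sq, tsum_mul_tsum_eq_tsum_sum_antidiagonal_of_summable_norm hfn hfn]
    exact tsum_congr E00
  have L1 : (∑' m : ℕ, y^(2*m+1) / (((m)! : ℝ) * ((m+1))!))^2 = ∑' n : ℕ, y^(2*n+2) * Bc n := by
    rw [sq, tsum_mul_tsum_eq_tsum_sum_antidiagonal_of_summable_norm hgn hgn]
    exact tsum_congr E11
  have L01 : (∑' m : ℕ, y^(2*m) / (((m)! : ℝ) * (m)!))
      * (∑' m : ℕ, y^(2*m+1) / (((m)! : ℝ) * ((m+1))!)) = ∑' n : ℕ, y^(2*n+1) * Cc n := by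
    rw [tsum_mul_tsum_eq_tsum_sum_antidiagonal_of_summable_norm hfn hgn]
    exact tsum_congr E01
  have SA : Summable (fun n : ℕ => y^(2*n) * Ac n) :=
    (summable_norm_sum_mul_antidiagonal_of_summable_norm hfn hfn).of_norm.congr E00
  have SB : Summable (fun n : ℕ => y^(2*n+2) * Bc n) :=
    (summable_norm_sum_mul_antidiagonal_of_summable_norm hgn hgn).of_norm.congr E11
  have SC : Summable (fun n : ℕ => y^(2*n+1) * Cc n) :=
    (summable_norm_sum_mul_antidiagonal_of_summable_norm hfn hgn).of_norm.congr E01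
  have hdiv : ∀ n : ℕ, y^(2*n+1) * Cc n / (2*y) = y^(2*n) * (Cc n / 2) := by
    intro n
    rw [pow_succ]
    field_simp
  have SC2 : Summable (fun n : ℕ => y^(2*n) * (Cc n / 2)) :=
    (SC.div_const (2*y)).congr hdiv
  have L2 : (∑' m : ℕ, y^(2*m) / (((m)! : ℝ) * (m)!))
      * (∑' m : ℕ, y^(2*m+1) / (((m)! : ℝ) * ((m+1))!)) / (2*y)
      = ∑' n : ℕ, y^(2*n) * (Cc n / 2) := by
    rw [L01, ← tsum_div_const]
    exact tsum_congr hdiv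
  set W : ℕ → ℝ := fun n => Nat.casesOn n 0 fun k => y^(2*k+2) * Bc k with hW
  have hWs : Summable W := by
    rw [← summable_nat_add_iff 1]; exact SB
  have hshift : (∑' n : ℕ, y^(2*n+2) * Bc n) = ∑' n : ℕ, W n := by
    rw [Summable.tsum_eq_zero_add hWs]
    show _ = 0 + _
    rw [zero_add]
  have hW0 : ∀ b, 0 ≤ W b := by
    intro b
    cases b with
    | zero => exact le_refl 0
    | succ k => show 0 ≤ y^(2*k+2) * Bc k; exact mul_nonneg (by positivity) (Bc_nonneg k)
  rw [R, L2, L1, hshift, ← Summable.tsum_add hWs SC2]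
  apply Summable.tsum_lt_tsum_of_nonneg (i := 0)
  · intro b
    exact add_nonneg (hW0 b) (mul_nonneg (by rw [pow_mul]; positivity)
      (by nlinarith [Cc_nonneg b]))
  · intro b
    cases b with
    | zero =>
      show W 0 + y^(2*0) * (Cc 0 / 2) ≤ y^(2*0) * Ac 0
      show (0:ℝ) + y^(2*0) * (Cc 0 / 2) ≤ y^(2*0) * Ac 0
      rw [Ac_zero, Cc_zero]
      norm_num
    | succ k =>
      show W (k+1) + y^(2*(k+1)) * (Cc (k+1) / 2) ≤ y^(2*(k+1)) * Ac (k+1)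
      show y^(2*k+2) * Bc k + y^(2*(k+1)) * (Cc (k+1) / 2) ≤ y^(2*(k+1)) * Ac (k+1)
      rw [show 2*(k+1) = 2*k+2 by ring, ← mul_add]
      exact mul_le_mul_of_nonneg_left (comb k) (by positivity)
  · show W 0 + y^(2*0) * (Cc 0 / 2) < y^(2*0) * Ac 0
    show (0:ℝ) + y^(2*0) * (Cc 0 / 2) < y^(2*0) * Ac 0
    rw [Ac_zero, Cc_zero]
    norm_num
  · exact SA

lemma I0_pos {x : ℝ} (hx : 0 < x) : 0 < besselI 0 x := by
  rw [I0_eq]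
  refine Summable.tsum_pos (sumf (x/2)) (fun m => by rw [pow_mul]; positivity) 0 ?_
  norm_num [Nat.factorial]

lemma besselI_key {x : ℝ} (hx : 0 < x) :
    besselI 1 x ^ 2 + besselI 0 x * besselI 1 x / x < besselI 0 x ^ 2 := by
  rw [I0_eq, I1_eq]
  have h := key_sum (y := x/2) (by positivity)
  rwa [show 2*(x/2) = x by ring] at h

theorem stmt_1 :
    (∀ x : ℝ, 0 < x → (psi 0 x) ^ 2 + psi 0 x / x - 1 < 0) ∧
    (∀ K r : ℝ, 1 < K → 0 < r → r = psi 0 (2 * K * r) →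
      r < Real.sqrt (1 - 1 / (2 * K))) := by
  have part1 : ∀ x : ℝ, 0 < x → (psi 0 x) ^ 2 + psi 0 x / x - 1 < 0 := by
    intro x hx
    have hpsi : psi 0 x = besselI 1 x / besselI 0 x := by rw [psi, zero_add]
    have h0 := I0_pos hx
    have key := besselI_key hx
    have keyx : besselI 1 x ^ 2 * x + besselI 0 x * besselI 1 x < besselI 0 x ^ 2 * x := by
      have h := mul_lt_mul_of_pos_right key hx
      rw [add_mul, div_mul_cancel₀ _ hx.ne'] at h
      exact h
    rw [hpsi, sub_neg, div_pow, div_div,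
      div_add_div _ _ (by positivity) (by positivity), div_lt_one (by positivity)]
    nlinarith [mul_lt_mul_of_pos_left keyx h0]
  refine ⟨part1, ?_⟩
  intro K r hK hr hreq
  have hK0 : (0:ℝ) < K := lt_trans zero_lt_one hK
  have hx : 0 < 2 * K * r := by positivity
  have h1 := part1 _ hx
  rw [← hreq] at h1
  have h2 : r / (2 * K * r) = 1 / (2 * K) := by
    rw [mul_comm, ← div_div, div_self hr.ne']
  rw [h2] at h1
  have h3 : r ^ 2 < 1 - 1 / (2 * K) := by linarith
  exact (Real.lt_sqrt hr.le).mpr h3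
end

section
/- For all x > 0 the Turán type inequality I₁²(x) − I₀(x)·I₂(x) < (1/x)·I₀(x)·I₁(x) holds. -/
open Real Filter Topology

open Finset

private lemma inv_fact_eq (a b : ℕ) :
    (1 : ℝ) / (a.factorial * b.factorial) = ((a + b).choose a : ℝ) / (a + b).factorial := by
  rw [Nat.cast_choose ℝ (Nat.le_add_right a b), Nat.add_sub_cancel_left]
  have h1 : (a.factorial : ℝ) ≠ 0 := by positivity
  have h2 : (b.factorial : ℝ) ≠ 0 := by positivity
  have h3 : ((a + b).factorial : ℝ) ≠ 0 := by positivity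
  field_simp

private lemma vand_gen (a b k : ℕ) :
    ((a + b).choose k : ℝ) = ∑ i ∈ range (k + 1), (a.choose i : ℝ) * (b.choose (k - i) : ℝ) := by
  have := Nat.add_choose_eq a b k
  rw [Finset.Nat.sum_antidiagonal_eq_sum_range_succ (fun i j => a.choose i * b.choose j) k] at this
  exact_mod_cast congrArg (Nat.cast : ℕ → ℝ) this

private noncomputable def bc (ν : ℕ) (t : ℝ) (m : ℕ) : ℝ :=
  t ^ (2 * m + ν) / (m.factorial * (m + ν).factorial)

private lemma bc_mul_bc (μ ν : ℕ) (t : ℝ) (k j : ℕ) :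
    bc μ t k * bc ν t j =
      t ^ (2 * (k + j) + μ + ν) * (((k + j + ν).choose k : ℝ) * ((k + j + μ).choose j : ℝ))
        / ((k + j + ν).factorial * (k + j + μ).factorial) := by
  unfold bc
  have h1 : (1 : ℝ) / (k.factorial * (j + ν).factorial)
      = ((k + j + ν).choose k : ℝ) / (k + j + ν).factorial := by
    have := inv_fact_eq k (j + ν)
    rwa [show k + (j + ν) = k + j + ν by ring] at this
  have h2 : (1 : ℝ) / (j.factorial * (k + μ).factorial)
      = ((k + j + μ).choose j : ℝ) / (k + j + μ).factorial := by
    have := inv_fact_eq j (k + μ)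
    rwa [show j + (k + μ) = k + j + μ by ring] at this
  have hp : t ^ (2 * k + μ) * t ^ (2 * j + ν) = t ^ (2 * (k + j) + μ + ν) := by
    rw [← pow_add]; ring_nf
  have e1 : (k.factorial : ℝ) ≠ 0 := by positivity
  have e2 : ((k + μ).factorial : ℝ) ≠ 0 := by positivity
  have e3 : (j.factorial : ℝ) ≠ 0 := by positivity
  have e4 : ((j + ν).factorial : ℝ) ≠ 0 := by positivity
  calc t ^ (2 * k + μ) / (k.factorial * (k + μ).factorial) *
        (t ^ (2 * j + ν) / (j.factorial * (j + ν).factorial))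
      = (t ^ (2 * k + μ) * t ^ (2 * j + ν)) *
        ((1 : ℝ) / (k.factorial * (j + ν).factorial)) *
        ((1 : ℝ) / (j.factorial * (k + μ).factorial)) := by ring
    _ = _ := by rw [hp, h1, h2]; ring

private lemma sum_bc_mul (μ ν : ℕ) (t : ℝ) (n : ℕ) :
    ∑ k ∈ range (n + 1), bc μ t k * bc ν t (n - k)
      = t ^ (2 * n + μ + ν) * ((2 * n + μ + ν).choose n : ℝ)
        / ((n + ν).factorial * (n + μ).factorial) := by
  have hterm : ∀ k ∈ range (n + 1), bc μ t k * bc ν t (n - k)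
      = t ^ (2 * n + μ + ν) * (((n + ν).choose k : ℝ) * ((n + μ).choose (n - k) : ℝ))
        / ((n + ν).factorial * (n + μ).factorial) := by
    intro k hk
    have hkn : k ≤ n := Nat.lt_succ_iff.mp (mem_range.mp hk)
    have hj : k + (n - k) = n := Nat.add_sub_cancel' hkn
    rw [bc_mul_bc, hj]
  rw [Finset.sum_congr rfl hterm, ← Finset.sum_div, ← Finset.mul_sum]
  congr 2
  rw [show (2 * n + μ + ν).choose n = ((n + ν) + (n + μ)).choose n from by congr 1; ring,
    vand_gen]

private lemma coeff_ineq (n : ℕ) :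
    ((2 * n + 2).choose n : ℝ) / ((n + 1).factorial * (n + 1).factorial)
      ≤ ((2 * n + 2).choose n : ℝ) / ((n + 2).factorial * n.factorial)
        + (1 / 2) * (((2 * n + 3).choose (n + 1) : ℝ)
            / ((n + 2).factorial * (n + 1).factorial)) := by
  have h1 : (2 * n + 3).choose (n + 1) = (2 * n + 2).choose n + (2 * n + 2).choose (n + 1) :=
    Nat.choose_succ_succ (2 * n + 2) n
  have h2 : (2 * n + 2).choose n ≤ (2 * n + 2).choose (n + 1) := by
    have := Nat.choose_le_middle n (2 * n + 2)
    simpa [show (2 * n + 2) / 2 = n + 1 by omega] using this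
  have hAB : 2 * ((2 * n + 2).choose n : ℝ) ≤ ((2 * n + 3).choose (n + 1) : ℝ) := by
    have : 2 * ((2 * n + 2).choose n) ≤ (2 * n + 3).choose (n + 1) := by omega
    exact_mod_cast this
  have key : ((2 * n + 2).choose n : ℝ) / ((n + 2).factorial * n.factorial)
        + (1 / 2) * (((2 * n + 3).choose (n + 1) : ℝ)
            / ((n + 2).factorial * (n + 1).factorial))
        - ((2 * n + 2).choose n : ℝ) / ((n + 1).factorial * (n + 1).factorial)
      = (((2 * n + 3).choose (n + 1) : ℝ) - 2 * ((2 * n + 2).choose n : ℝ))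
          / (2 * ((n + 2).factorial * (n + 1).factorial)) := by
    have e1 : ((n + 1).factorial : ℝ) = (n + 1) * n.factorial := by
      exact_mod_cast Nat.factorial_succ n
    have e2 : ((n + 2).factorial : ℝ) = (n + 2) * ((n + 1) * n.factorial) := by
      rw [show ((n+2).factorial) = (n+2) * (n+1).factorial from Nat.factorial_succ (n+1)]
      push_cast [Nat.factorial_succ n]; ring
    rw [e2, e1]
    have hp : (n.factorial : ℝ) ≠ 0 := by positivity
    have hn1 : ((n : ℝ) + 1) ≠ 0 := by positivity
    have hn2 : ((n : ℝ) + 2) ≠ 0 := by positivity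
    field_simp
    ring
  have hnonneg : (0 : ℝ) ≤ (((2 * n + 3).choose (n + 1) : ℝ) - 2 * ((2 * n + 2).choose n : ℝ))
      / (2 * ((n + 2).factorial * (n + 1).factorial)) := by
    apply div_nonneg (by linarith) (by positivity)
  linarith [key, hnonneg]

private lemma bc_norm_summable (ν : ℕ) (t : ℝ) : Summable fun m => ‖bc ν t m‖ := by
  apply Summable.of_nonneg_of_le (fun m => norm_nonneg _) (fun m => ?_)
    ((Real.summable_pow_div_factorial (t ^ 2)).mul_left (|t| ^ ν))
  have hd : (0 : ℝ) < m.factorial * (m + ν).factorial := by positivity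
  have habs : ‖bc ν t m‖ = |t| ^ (2 * m + ν) / (m.factorial * (m + ν).factorial) := by
    rw [bc, Real.norm_eq_abs, abs_div, abs_pow, abs_of_pos hd]
  rw [habs, pow_add, pow_mul, sq_abs]
  rw [mul_comm ((t ^ 2) ^ m) (|t| ^ ν), mul_div_assoc]
  apply mul_le_mul_of_nonneg_left _ (by positivity)
  apply div_le_div_of_nonneg_left (by positivity) (by positivity)
  exact le_mul_of_one_le_right (by positivity)
    (by exact_mod_cast Nat.one_le_iff_ne_zero.mpr (Nat.factorial_pos (m + ν)).ne')

private lemma bc_summable (ν : ℕ) (t : ℝ) : Summable (bc ν t) :=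
  (bc_norm_summable ν t).of_norm

private lemma besselI_nat (ν : ℕ) (x : ℝ) :
    besselI ν x = ∑' m : ℕ, bc ν (x / 2) m := by
  unfold besselI bc
  congr 1; funext m
  rw [show (2 * (m : ℝ) + ν) = ((2 * m + ν : ℕ) : ℝ) by push_cast; ring,
    Real.rpow_natCast,
    show ((m : ℝ) + ν + 1) = ((m + ν : ℕ) : ℝ) + 1 by push_cast; ring,
    Real.Gamma_nat_eq_factorial]

private noncomputable def SS (μ ν : ℕ) (t : ℝ) (n : ℕ) : ℝ :=
  ∑ k ∈ range (n + 1), bc μ t k * bc ν t (n - k)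

private lemma besselI_mul (μ ν : ℕ) (x : ℝ) :
    besselI μ x * besselI ν x = ∑' n, SS μ ν (x / 2) n := by
  rw [besselI_nat, besselI_nat,
    tsum_mul_tsum_eq_tsum_sum_range_of_summable_norm (bc_norm_summable μ (x / 2))
      (bc_norm_summable ν (x / 2))]
  rfl

private lemma SS_summable (μ ν : ℕ) (t : ℝ) : Summable (SS μ ν t) :=
  summable_sum_mul_range_of_summable_norm' (bc_norm_summable μ t) (bc_summable μ t)
    (bc_norm_summable ν t) (bc_summable ν t)

private lemma SS_eq (μ ν : ℕ) (t : ℝ) (n : ℕ) :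
    SS μ ν t n = t ^ (2 * n + μ + ν) * ((2 * n + μ + ν).choose n : ℝ)
      / ((n + ν).factorial * (n + μ).factorial) := sum_bc_mul μ ν t n

private lemma key_ineq {x : ℝ} (hx : 0 < x) (n : ℕ) :
    SS 1 1 (x / 2) n ≤ SS 0 2 (x / 2) n + (1 / x) * SS 0 1 (x / 2) (n + 1) := by
  have ht : 0 < x / 2 := by linarith
  set t := x / 2 with htdef
  rw [SS_eq, SS_eq, SS_eq]
  simp only [show 2 * n + 1 + 1 = 2 * n + 2 from by ring,
    show 2 * n + 0 + 2 = 2 * n + 2 from by ring,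
    show 2 * (n + 1) + 0 + 1 = 2 * n + 3 from by ring,
    show n + 1 + 1 = n + 2 from rfl, Nat.add_zero]
  have ht0 : t ≠ 0 := ne_of_gt ht
  have hxt : x = 2 * t := by rw [htdef]; ring
  have h13 : (1 / x) * (t ^ (2 * n + 3) * (((2 * n + 3).choose (n + 1) : ℝ))
        / ((n + 2).factorial * (n + 1).factorial))
      = t ^ (2 * n + 2) * ((1 / 2) * (((2 * n + 3).choose (n + 1) : ℝ)
        / ((n + 2).factorial * (n + 1).factorial))) := by
    rw [hxt, pow_succ]
    have d1 : ((n + 2).factorial : ℝ) ≠ 0 := by positivity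
    have d2 : ((n + 1).factorial : ℝ) ≠ 0 := by positivity
    field_simp
  rw [h13, mul_div_assoc, mul_div_assoc, ← mul_add]
  exact mul_le_mul_of_nonneg_left (coeff_ineq n) (by positivity)

theorem stmt_2 (x : ℝ) (hx : 0 < x) :
    (besselI 1 x) ^ 2 - besselI 0 x * besselI 2 x <
      (1 / x) * besselI 0 x * besselI 1 x := by
  have h11 : besselI 1 x ^ 2 = ∑' n, SS 1 1 (x / 2) n := by
    rw [sq]; simpa using besselI_mul 1 1 x
  have h02 : besselI 0 x * besselI 2 x = ∑' n, SS 0 2 (x / 2) n := by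
    simpa using besselI_mul 0 2 x
  have h01 : besselI 0 x * besselI 1 x = ∑' n, SS 0 1 (x / 2) n := by
    simpa using besselI_mul 0 1 x
  rw [mul_assoc, h11, h02, h01]
  have s11 := SS_summable 1 1 (x / 2)
  have s02 := SS_summable 0 2 (x / 2)
  have s01 := SS_summable 0 1 (x / 2)
  have s01' : Summable fun n => SS 0 1 (x / 2) (n + 1) := (summable_nat_add_iff 1).mpr s01
  have hle : ∑' n, SS 1 1 (x / 2) n
      ≤ ∑' n, (SS 0 2 (x / 2) n + (1 / x) * SS 0 1 (x / 2) (n + 1)) :=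
    Summable.tsum_le_tsum (key_ineq hx) s11 (s02.add (s01'.mul_left (1 / x)))
  have hadd : ∑' n, (SS 0 2 (x / 2) n + (1 / x) * SS 0 1 (x / 2) (n + 1))
      = ∑' n, SS 0 2 (x / 2) n + (1 / x) * ∑' n, SS 0 1 (x / 2) (n + 1) := by
    rw [Summable.tsum_add s02 (s01'.mul_left (1 / x)), tsum_mul_left]
  have hsplit : (1 / x) * ∑' n, SS 0 1 (x / 2) n
      = (1 / x) * SS 0 1 (x / 2) 0 + (1 / x) * ∑' n, SS 0 1 (x / 2) (n + 1) := by
    rw [Summable.tsum_eq_zero_add s01]; ring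
  have h0 : SS 0 1 (x / 2) 0 = x / 2 := by
    norm_num [SS, bc, Finset.sum_range_one]
  have hpos : (0 : ℝ) < (1 / x) * SS 0 1 (x / 2) 0 := by
    rw [h0]; positivity
  linarith [hle, hadd, hsplit, hpos]
end

section
/- Let K > 1 and let r > 0 satisfy r = Ψ(2Kr), where Ψ(x) = I₁(x)/I₀(x). Then r < (1 − 1/K)^{1/4}. -/
open Real Filter Topology

open Set

noncomputable def cA0 (m : ℕ) : ℝ := 1 / (m.factorial * m.factorial)
noncomputable def cA1 (m : ℕ) : ℝ := 1 / (m.factorial * (m+1).factorial)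
noncomputable def cA2 (m : ℕ) : ℝ := 1 / (m.factorial * (m+2).factorial)

lemma fact_pos' (m : ℕ) : (0:ℝ) < m.factorial := by exact_mod_cast m.factorial_pos
lemma fact_one_le (m : ℕ) : (1:ℝ) ≤ m.factorial := by exact_mod_cast m.factorial_pos

lemma cA0_bound (m : ℕ) : |cA0 m| ≤ 1 / m.factorial := by
  have h1 := fact_pos' m; have h3 := fact_one_le m
  rw [cA0, abs_of_nonneg (by positivity), div_le_div_iff₀ (by positivity) h1]
  nlinarith

lemma cA1_bound (m : ℕ) : |cA1 m| ≤ 1 / m.factorial := by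
  have h1 := fact_pos' m; have h2 := fact_pos' (m+1); have h3 := fact_one_le (m+1)
  rw [cA1, abs_of_nonneg (by positivity), div_le_div_iff₀ (by positivity) h1]
  nlinarith

lemma cA2_bound (m : ℕ) : |cA2 m| ≤ 1 / m.factorial := by
  have h1 := fact_pos' m; have h2 := fact_pos' (m+2); have h3 := fact_one_le (m+2)
  rw [cA2, abs_of_nonneg (by positivity), div_le_div_iff₀ (by positivity) h1]
  nlinarith

lemma summable_psum (a : ℕ → ℝ) (h : ∀ m, |a m| ≤ 1 / m.factorial) (t : ℝ) :
    Summable (fun m : ℕ => a m * t ^ m) := by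
  have h2 : ∀ m : ℕ, ‖a m * t ^ m‖ ≤ |t| ^ m / m.factorial := by
    intro m
    rw [norm_mul, norm_pow, Real.norm_eq_abs, Real.norm_eq_abs]
    calc |a m| * |t| ^ m ≤ (1 / m.factorial) * |t| ^ m :=
          mul_le_mul_of_nonneg_right (h m) (by positivity)
      _ = |t| ^ m / m.factorial := by ring
  exact Summable.of_norm (Summable.of_nonneg_of_le (fun m => norm_nonneg _) h2
    (Real.summable_pow_div_factorial |t|))

lemma deriv_coeff_bound (a : ℕ → ℝ) (h : ∀ m, |a m| ≤ 1 / m.factorial) (m : ℕ) :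
    |a (m+1) * (m+1)| ≤ 1 / m.factorial := by
  have h1 := h (m+1)
  have h2 : ((m+1).factorial : ℝ) = (m+1) * m.factorial := by exact_mod_cast Nat.factorial_succ m
  have h3 : (0:ℝ) < m.factorial := by exact_mod_cast m.factorial_pos
  have h4 : (0:ℝ) < (m:ℝ)+1 := by positivity
  rw [abs_mul, abs_of_nonneg h4.le]
  rw [h2] at h1
  calc |a (m+1)| * ((m:ℝ)+1) ≤ (1 / (((m:ℝ)+1) * m.factorial)) * ((m:ℝ)+1) :=
        mul_le_mul_of_nonneg_right h1 h4.le
    _ = 1 / m.factorial := by field_simp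

lemma hasDerivAt_psum (a : ℕ → ℝ) (h : ∀ m, |a m| ≤ 1 / m.factorial) (t : ℝ) :
    HasDerivAt (fun s : ℝ => ∑' m : ℕ, a m * s ^ m)
      (∑' m : ℕ, a (m+1) * ((m:ℝ)+1) * t ^ m) t := by
  set R : ℝ := |t| + 1 with hRdef
  have hRpos : 0 < R := by positivity
  have htR : t ∈ Set.Ioo (-R) R := by
    constructor
    · nlinarith [neg_abs_le t]
    · nlinarith [le_abs_self t]
  have hu : Summable (fun m : ℕ => |a m| * ((m:ℝ) * R ^ (m-1))) := by
    rw [← summable_nat_add_iff 1]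
    have : ∀ m : ℕ, |a (m+1)| * (((m+1:ℕ):ℝ) * R ^ (m+1-1)) = |a (m+1) * ((m:ℝ)+1)| * R ^ m := by
      intro m
      rw [abs_mul, abs_of_nonneg (by positivity : (0:ℝ) ≤ (m:ℝ)+1)]
      push_cast
      ring
    have hb : ∀ m : ℕ, |a (m+1) * ((m:ℝ)+1)| * R ^ m ≤ R ^ m / m.factorial := by
      intro m
      have h2 : |a (m+1) * ((m:ℝ)+1)| ≤ 1 / m.factorial := by
        have := deriv_coeff_bound a h m
        push_cast at this ⊢
        convert this using 3
      calc |a (m+1) * ((m:ℝ)+1)| * R ^ m ≤ (1 / m.factorial) * R ^ m :=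
            mul_le_mul_of_nonneg_right h2 (by positivity)
        _ = R ^ m / m.factorial := by ring
    apply Summable.of_nonneg_of_le (fun m => by positivity) (fun m => (this m).le.trans (hb m))
    exact Real.summable_pow_div_factorial R
  have key : HasDerivAt (fun s : ℝ => ∑' m : ℕ, a m * s ^ m)
      (∑' m : ℕ, a m * ((m:ℝ) * t ^ (m-1))) t := by
    apply hasDerivAt_tsum_of_isPreconnected hu isOpen_Ioo
      (convex_Ioo (-R) R).isPreconnected
      (g := fun (m : ℕ) (s : ℝ) => a m * s ^ m)
      (g' := fun (m : ℕ) (s : ℝ) => a m * ((m:ℝ) * s ^ (m-1)))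
      (fun m y _ => (hasDerivAt_pow m y).const_mul (a m))
      ?_ htR ?_ htR
    · intro m y hy
      rw [Real.norm_eq_abs, abs_mul]
      apply mul_le_mul_of_nonneg_left _ (abs_nonneg _)
      rw [abs_mul, abs_of_nonneg (by positivity : (0:ℝ) ≤ (m:ℝ))]
      apply mul_le_mul_of_nonneg_left _ (by positivity)
      rw [abs_pow]
      apply pow_le_pow_left₀ (abs_nonneg _)
      rw [abs_le]
      exact ⟨hy.1.le, hy.2.le⟩
    · exact summable_psum a h t
  convert key using 1
  have hs : Summable (fun m : ℕ => a m * ((m:ℝ) * t ^ (m-1))) := by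
    apply Summable.of_norm
    apply Summable.of_nonneg_of_le (fun m => norm_nonneg _) _ hu
    intro m
    rw [Real.norm_eq_abs, abs_mul]
    apply mul_le_mul_of_nonneg_left _ (abs_nonneg _)
    rw [abs_mul, abs_of_nonneg (by positivity : (0:ℝ) ≤ (m:ℝ))]
    apply mul_le_mul_of_nonneg_left _ (by positivity)
    rw [abs_pow]
    apply pow_le_pow_left₀ (abs_nonneg _)
    nlinarith [le_abs_self t, abs_nonneg t]
  rw [Summable.tsum_eq_zero_add hs]
  simp only [Nat.cast_zero, zero_mul, mul_zero, zero_add]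
  apply tsum_congr
  intro m
  push_cast
  ring_nf

noncomputable def Fb (t : ℝ) : ℝ := ∑' m : ℕ, cA0 m * t ^ m
noncomputable def Gb (t : ℝ) : ℝ := ∑' m : ℕ, cA1 m * t ^ m
noncomputable def Hb (t : ℝ) : ℝ := ∑' m : ℕ, cA2 m * t ^ m

lemma fact_succ_cast (m : ℕ) : ((m+1).factorial : ℝ) = ((m:ℝ)+1) * m.factorial := by
  rw [Nat.factorial_succ]; push_cast; ring

lemma cA0_deriv (m : ℕ) : cA0 (m+1) * ((m:ℝ)+1) = cA1 m := by
  rw [cA0, cA1, fact_succ_cast m]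
  have h1 := fact_pos' m
  have h2 : (0:ℝ) < (m:ℝ)+1 := by positivity
  field_simp

lemma cA1_deriv (m : ℕ) : cA1 (m+1) * ((m:ℝ)+1) = cA2 m := by
  have e1 : m+1+1 = m+2 := rfl
  rw [cA1, cA2, e1, fact_succ_cast m]
  have h1 := fact_pos' m
  have h1' := fact_pos' (m+2)
  have h2 : (0:ℝ) < (m:ℝ)+1 := by positivity
  field_simp

lemma hasDerivAt_Fb (t : ℝ) : HasDerivAt Fb (Gb t) t := by
  have h := hasDerivAt_psum cA0 cA0_bound t
  simp only [cA0_deriv] at h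
  exact h

lemma hasDerivAt_Gb (t : ℝ) : HasDerivAt Gb (Hb t) t := by
  have h := hasDerivAt_psum cA1 cA1_bound t
  simp only [cA1_deriv] at h
  exact h

lemma cA_sub (m : ℕ) : cA0 (m+1) - cA1 (m+1) = cA2 m := by
  have e1 : m+1+1 = m+2 := rfl
  have h4 : ((m+2).factorial : ℝ) = ((m:ℝ)+2) * (m+1).factorial := by
    have := fact_succ_cast (m+1); push_cast at this ⊢; linarith [this]
  rw [cA0, cA1, cA2, e1, h4, fact_succ_cast m]
  have h1 := fact_pos' m
  have h2 : (0:ℝ) < (m:ℝ)+1 := by positivity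
  have h5 : (0:ℝ) < (m:ℝ)+2 := by positivity
  field_simp
  ring

lemma FGH (t : ℝ) : t * Hb t = Fb t - Gb t := by
  have hF := summable_psum cA0 cA0_bound t
  have hG := summable_psum cA1 cA1_bound t
  have hs : Summable (fun m : ℕ => (cA0 m - cA1 m) * t ^ m) := by
    apply Summable.congr (hF.sub hG)
    intro m; ring
  have h1 : Fb t - Gb t = ∑' m : ℕ, (cA0 m - cA1 m) * t ^ m := by
    rw [Fb, Gb, ← Summable.tsum_sub hF hG]
    apply tsum_congr; intro m; ring
  have h0 : (cA0 0 - cA1 0) * t ^ 0 = 0 := by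
    simp [cA0, cA1]
  rw [h1, Summable.tsum_eq_zero_add hs, h0, zero_add, Hb, ← tsum_mul_left]
  apply tsum_congr
  intro m
  rw [cA_sub m]
  ring

lemma Fb_pos {t : ℝ} (ht : 0 ≤ t) : 0 < Fb t := by
  apply Summable.tsum_pos (summable_psum cA0 cA0_bound t) _ 0
  · simp [cA0]
  · intro m
    have := fact_pos' m
    have : (0:ℝ) < cA0 m := by rw [cA0]; positivity
    positivity

lemma Gb_pos {t : ℝ} (ht : 0 ≤ t) : 0 < Gb t := by
  apply Summable.tsum_pos (summable_psum cA1 cA1_bound t) _ 0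
  · simp [cA1]
  · intro m
    have h1 := fact_pos' m
    have h2 := fact_pos' (m+1)
    have : (0:ℝ) < cA1 m := by rw [cA1]; positivity
    positivity

lemma Gb_le_Fb {t : ℝ} (ht : 0 ≤ t) : Gb t ≤ Fb t := by
  apply Summable.tsum_le_tsum _ (summable_psum cA1 cA1_bound t) (summable_psum cA0 cA0_bound t)
  intro m
  apply mul_le_mul_of_nonneg_right _ (by positivity)
  rw [cA0, cA1]
  have h1 := fact_pos' m
  have h2 := fact_pos' (m+1)
  have h3 : (m.factorial:ℝ) ≤ (m+1).factorial := by
    exact_mod_cast Nat.factorial_le (Nat.le_succ m)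
  apply div_le_div_of_nonneg_left one_pos.le (by positivity) ?_ |>.trans_eq rfl
  nlinarith

lemma half_le_Hb {t : ℝ} (ht : 0 ≤ t) : 1/2 ≤ Hb t := by
  have := Summable.le_tsum (summable_psum cA2 cA2_bound t) 0 ?_
  · calc (1/2 : ℝ) = cA2 0 * t ^ 0 := by norm_num [cA2]
      _ ≤ Hb t := this
  · intro m _
    have h1 := fact_pos' m
    have h2 := fact_pos' (m+2)
    have : (0:ℝ) < cA2 m := by rw [cA2]; positivity
    positivity

lemma Fb_le {t : ℝ} (ht : 0 ≤ t) (ht2 : t ≤ 1/4) : Fb t ≤ 4/3 := by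
  have hgeo : Summable (fun m : ℕ => t ^ m) := summable_geometric_of_lt_one ht (by linarith)
  have h1 : Fb t ≤ ∑' m : ℕ, t ^ m := by
    apply Summable.tsum_le_tsum _ (summable_psum cA0 cA0_bound t) hgeo
    intro m
    have h1 := fact_pos' m
    have h3 : (1:ℝ) ≤ m.factorial := by exact_mod_cast m.factorial_pos
    calc cA0 m * t ^ m ≤ 1 * t ^ m := by
          apply mul_le_mul_of_nonneg_right _ (by positivity)
          rw [cA0, div_le_one (by positivity)]
          nlinarith
      _ = t ^ m := by ring
  rw [tsum_geometric_of_lt_one ht (by linarith)] at h1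
  have : (1 - t)⁻¹ ≤ 4/3 := by
    rw [inv_le_comm₀ (by linarith) (by norm_num)]
    linarith
  linarith

lemma besselI0_eq (x : ℝ) : besselI 0 x = Fb (x^2/4) := by
  rw [besselI, Fb]
  apply tsum_congr
  intro m
  have e1 : 2 * (m:ℝ) + 0 = ((2*m : ℕ) : ℝ) := by push_cast; ring
  have e2 : (m:ℝ) + 0 + 1 = (m:ℝ) + 1 := by ring
  rw [e1, e2, Real.rpow_natCast, Real.Gamma_nat_eq_factorial, cA0]
  rw [pow_mul]
  have e3 : (x/2)^2 = x^2/4 := by ring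
  rw [e3]
  ring

lemma besselI1_eq (x : ℝ) : besselI 1 x = (x/2) * Gb (x^2/4) := by
  rw [besselI, Gb, ← tsum_mul_left]
  apply tsum_congr
  intro m
  have e1 : 2 * (m:ℝ) + 1 = ((2*m+1 : ℕ) : ℝ) := by push_cast; ring
  have e2 : (m:ℝ) + 1 + 1 = ((m+1 : ℕ) : ℝ) + 1 := by push_cast; ring
  rw [e1, e2, Real.rpow_natCast, Real.Gamma_nat_eq_factorial, cA1]
  rw [pow_succ', pow_mul]
  have e3 : (x/2)^2 = x^2/4 := by ring
  rw [e3]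
  ring

noncomputable def phi (x : ℝ) : ℝ := (x/2) * Gb (x^2/4) / Fb (x^2/4)

lemma psi0_eq (x : ℝ) : psi 0 x = phi x := by
  rw [psi, phi]
  norm_num
  rw [besselI0_eq, besselI1_eq]

lemma hasDerivAt_phi {x : ℝ} (hx : 0 < x) :
    HasDerivAt phi (1 - phi x / x - (phi x)^2) x := by
  have hu : HasDerivAt (fun y : ℝ => y^2/4) (x/2) x := by
    have := (hasDerivAt_pow 2 x).div_const 4
    refine this.congr_deriv ?_
    push_cast
    ring
  have hD : HasDerivAt (fun y : ℝ => Fb (y^2/4)) (Gb (x^2/4) * (x/2)) x :=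
    (hasDerivAt_Fb (x^2/4)).comp (h₂ := Fb) x hu
  have hGc : HasDerivAt (fun y : ℝ => Gb (y^2/4)) (Hb (x^2/4) * (x/2)) x :=
    (hasDerivAt_Gb (x^2/4)).comp (h₂ := Gb) x hu
  have hN : HasDerivAt (fun y : ℝ => (y/2) * Gb (y^2/4))
      ((1/2) * Gb (x^2/4) + (x/2) * (Hb (x^2/4) * (x/2))) x :=
    ((hasDerivAt_id x).div_const 2).mul hGc
  have hFne : Fb (x^2/4) ≠ 0 := (Fb_pos (by positivity)).ne'
  have hphi : HasDerivAt phi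
      ((((1/2) * Gb (x^2/4) + (x/2) * (Hb (x^2/4) * (x/2))) * Fb (x^2/4)
        - (x/2) * Gb (x^2/4) * (Gb (x^2/4) * (x/2))) / (Fb (x^2/4))^2) x :=
    hN.div hD hFne
  convert hphi using 1
  have hFG : (x^2/4) * Hb (x^2/4) = Fb (x^2/4) - Gb (x^2/4) := FGH _
  have hkey : (x/2) * (Hb (x^2/4) * (x/2)) = Fb (x^2/4) - Gb (x^2/4) := by
    nlinarith [hFG]
  rw [hkey, phi]
  have hFpos := Fb_pos (show (0:ℝ) ≤ x^2/4 by positivity)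
  field_simp
  ring

noncomputable def hfun (x : ℝ) : ℝ := 1 - 2 * phi x / x - (phi x)^4

lemma hasDerivAt_hfun {x : ℝ} (hx : 0 < x) :
    HasDerivAt hfun
      (0 - (2 * (1 - phi x / x - (phi x)^2) * x - 2 * phi x) / x^2
        - 4 * (phi x)^3 * (1 - phi x / x - (phi x)^2)) x := by
  have hp := hasDerivAt_phi hx
  have t2 : HasDerivAt (fun y => 2 * phi y / y)
      ((2 * (1 - phi x / x - (phi x)^2) * x - 2 * phi x * 1) / x^2) x :=
    (hp.const_mul 2).div (hasDerivAt_id x) hx.ne'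
  have t3 : HasDerivAt (fun y => (phi y)^4) ((4:ℕ) * (phi x)^(4-1) * (1 - phi x / x - (phi x)^2)) x :=
    hp.pow 4
  have := ((hasDerivAt_const x (1:ℝ)).sub t2).sub t3
  refine this.congr_deriv ?_
  push_cast
  ring

lemma deriv_pos_at_zero {x a : ℝ} (hx : 1 < x) (ha : 0 < a)
    (hzero : 1 - 2 * a / x - a^4 = 0) :
    0 < 0 - (2 * (1 - a / x - a^2) * x - 2 * a) / x^2 - 4 * a^3 * (1 - a / x - a^2) := by
  have hx0 : (0:ℝ) < x := by linarith
  have h2ax : 0 < 2 * a / x := by positivity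
  have h4 : a^4 < 1 := by linarith
  have ha1 : a < 1 := by
    by_contra hc
    push_neg at hc
    have := pow_le_pow_left₀ (by norm_num : (0:ℝ) ≤ 1) hc 4
    simp at this
    linarith
  have h4pos : 0 < 1 - a^4 := by linarith
  have hzero' : x - 2*a - x*a^4 = 0 := by
    field_simp at hzero
    linarith
  have hxa : x = 2 * a / (1 - a^4) := by
    rw [eq_div_iff h4pos.ne']
    linear_combination hzero'
  have key : 0 - (2 * (1 - a / x - a^2) * x - 2 * a) / x^2 - 4 * a^3 * (1 - a / x - a^2)
      = a * (1 - a^2)^3 := by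
    rw [hxa]
    have hane : a ≠ 0 := ha.ne'
    field_simp
    ring
  rw [key]
  have : 0 < 1 - a^2 := by nlinarith
  positivity

lemma phi_pos {x : ℝ} (hx : 0 < x) : 0 < phi x := by
  have h1 := Fb_pos (show (0:ℝ) ≤ x^2/4 by positivity)
  have h2 := Gb_pos (show (0:ℝ) ≤ x^2/4 by positivity)
  rw [phi]
  positivity

lemma phi_le {x : ℝ} (hx : 0 < x) : phi x ≤ x/2 := by
  have h1 := Fb_pos (show (0:ℝ) ≤ x^2/4 by positivity)
  have h2 := Gb_le_Fb (show (0:ℝ) ≤ x^2/4 by positivity)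
  rw [phi, div_le_iff₀ h1]
  nlinarith

lemma hfun_pos_small {x : ℝ} (hx : 0 < x) (hx1 : x ≤ 1) : 0 < hfun x := by
  have hu0 : (0:ℝ) < x^2/4 := by positivity
  have hu4 : x^2/4 ≤ 1/4 := by nlinarith
  have hF := Fb_pos hu0.le
  have hFle := Fb_le hu0.le hu4
  have hFG : x^2/4/2 ≤ Fb (x^2/4) - Gb (x^2/4) := by
    have h1 := FGH (x^2/4)
    have h2 := half_le_Hb hu0.le
    nlinarith
  have hp1 : 0 < phi x := phi_pos hx
  have hp2 : phi x ≤ x/2 := phi_le hx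
  have hp4 : (phi x)^4 ≤ (x^2/4)^2 := by
    have h5 : (phi x)^4 ≤ (x/2)^4 := pow_le_pow_left₀ hp1.le hp2 4
    calc (phi x)^4 ≤ (x/2)^4 := h5
      _ = (x^2/4)^2 := by ring
  have hGF : 2 * phi x / x = Gb (x^2/4) / Fb (x^2/4) := by
    rw [phi]
    field_simp
  rw [hfun, hGF]
  have key : Gb (x^2/4) / Fb (x^2/4) ≤ 1 - 3*(x^2/4)/8 := by
    rw [div_le_iff₀ hF]
    nlinarith
  nlinarith

lemma hfun_pos {x : ℝ} (hx : 0 < x) : 0 < hfun x := by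
  by_contra hcon
  push_neg at hcon
  have hx1 : 1 < x := by
    by_contra hc2
    push_neg at hc2
    exact absurd (hfun_pos_small hx hc2) (by linarith)
  set S : Set ℝ := Icc 1 x ∩ hfun ⁻¹' Iic 0 with hS
  have hSne : S.Nonempty := ⟨x, ⟨hx1.le, le_refl x⟩, hcon⟩
  have hSbdd : BddBelow S := ⟨1, fun y hy => hy.1.1⟩
  have hScl : IsClosed S := by
    have hcont : ContinuousOn hfun (Icc 1 x) := fun y hy =>
      (hasDerivAt_hfun (by linarith [hy.1] : (0:ℝ) < y)).continuousAt.continuousWithinAt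
    exact hcont.preimage_isClosed_of_isClosed isClosed_Icc isClosed_Iic
  set x₀ : ℝ := sInf S with hx₀def
  have hx₀S : x₀ ∈ S := hScl.csInf_mem hSne hSbdd
  have hx₀1 : 1 ≤ x₀ := hx₀S.1.1
  have hx₀x : x₀ ≤ x := hx₀S.1.2
  have hx₀le : hfun x₀ ≤ 0 := hx₀S.2
  have hx₀gt1 : 1 < x₀ := by
    rcases eq_or_lt_of_le hx₀1 with h | h
    · have h1 := hfun_pos_small one_pos le_rfl
      rw [h] at h1
      linarith
    · exact h
  have hx₀pos : (0:ℝ) < x₀ := by linarith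
  have hbefore : ∀ y, 1 < y → y < x₀ → 0 < hfun y := by
    intro y hy1 hy2
    by_contra hcy
    push_neg at hcy
    have : y ∈ S := ⟨⟨hy1.le, by linarith⟩, hcy⟩
    have := csInf_le hSbdd this
    linarith
  -- hfun x₀ = 0
  have hx₀zero : hfun x₀ = 0 := by
    refine le_antisymm hx₀le ?_
    have htend : Tendsto hfun (𝓝[<] x₀) (𝓝 (hfun x₀)) :=
      ((hasDerivAt_hfun hx₀pos).continuousAt.continuousWithinAt).tendsto
    refine ge_of_tendsto htend ?_
    filter_upwards [Ioo_mem_nhdsLT hx₀gt1] with y hy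
    exact (hbefore y hy.1 hy.2).le
  -- derivative is positive at x₀
  have hd := hasDerivAt_hfun hx₀pos
  have hdpos : 0 < 0 - (2 * (1 - phi x₀ / x₀ - (phi x₀)^2) * x₀ - 2 * phi x₀) / x₀^2
      - 4 * (phi x₀)^3 * (1 - phi x₀ / x₀ - (phi x₀)^2) := by
    apply deriv_pos_at_zero hx₀gt1 (phi_pos hx₀pos)
    rw [hfun] at hx₀zero
    linarith [hx₀zero]
  -- but the slope from the left is ≤ 0
  have hdle : 0 - (2 * (1 - phi x₀ / x₀ - (phi x₀)^2) * x₀ - 2 * phi x₀) / x₀^2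
      - 4 * (phi x₀)^3 * (1 - phi x₀ / x₀ - (phi x₀)^2) ≤ 0 := by
    have hdw := hd.hasDerivWithinAt (s := Iio x₀)
    rw [hasDerivWithinAt_iff_tendsto_slope, Set.diff_singleton_eq_self (by simp)] at hdw
    refine le_of_tendsto hdw ?_
    filter_upwards [Ioo_mem_nhdsLT hx₀gt1] with y hy
    rw [slope_def_field]
    have h1 : 0 < hfun y := hbefore y hy.1 hy.2
    rw [hx₀zero]
    have h2 : y - x₀ < 0 := by linarith [hy.2]
    exact div_nonpos_of_nonneg_of_nonpos (by linarith) h2.le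
  linarith


theorem stmt_3 (K r : ℝ) (hK : 1 < K) (hr : 0 < r)
    (heq : r = psi 0 (2 * K * r)) :
    r < (1 - 1 / K) ^ ((1 : ℝ) / 4) := by
  have hK0 : (0:ℝ) < K := by linarith
  have hx₁ : (0:ℝ) < 2 * K * r := by positivity
  have hphi : r = phi (2 * K * r) := heq.trans (psi0_eq (2 * K * r))
  have hh := hfun_pos hx₁
  rw [hfun, ← hphi] at hh
  have hfrac : 2 * r / (2 * K * r) = 1 / K := by
    field_simp
  rw [hfrac] at hh
  have hr4 : r^4 < 1 - 1/K := by linarith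
  have key : r = (r^4) ^ ((1:ℝ)/4) := by
    rw [← Real.rpow_natCast r 4, ← Real.rpow_mul hr.le]
    norm_num
  rw [key]
  exact Real.rpow_lt_rpow (by positivity) hr4 (by norm_num)
end

section
/- For all x > 0 the Turán type inequality I₁⁴(x) < I₀³(x)·I₂(x) holds. -/
open Real Filter Topology

namespace Turan

open Finset

noncomputable def gg (t : ℝ) (n : ℕ) : ℝ :=
  ((2 * n).choose n : ℝ) * t ^ (2 * n) / (((n : ℝ) + 1) * ((n.factorial : ℝ) * (n.factorial : ℝ)))
noncomputable def seqa (t : ℝ) (n : ℕ) : ℝ := t ^ (2 * n) / ((n.factorial : ℝ) * (n.factorial : ℝ))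
noncomputable def seqb (t : ℝ) (n : ℕ) : ℝ :=
  t ^ (2 * n + 1) / ((n.factorial : ℝ) * ((n + 1).factorial : ℝ))
noncomputable def seqc (t : ℝ) (n : ℕ) : ℝ :=
  t ^ (2 * n + 2) / ((n.factorial : ℝ) * ((n + 2).factorial : ℝ))
noncomputable def alph (t : ℝ) (n : ℕ) : ℝ := ((n : ℝ) + 1) * gg t n
noncomputable def bet (t : ℝ) (n : ℕ) : ℝ := ((n : ℝ) + 1) * gg t (n + 1)
noncomputable def gam (t : ℝ) (n : ℕ) : ℝ := ((n : ℝ) + 1) ^ 2 / ((n : ℝ) + 2) * gg t (n + 1)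
noncomputable def qq (t : ℝ) (n : ℕ) : ℝ := ((n : ℝ) + 1) / ((n : ℝ) + 2) * gg t (n + 1)

/-- shift a sequence by one, inserting a zero -/
noncomputable def shf (f : ℕ → ℝ) : ℕ → ℝ := fun n => match n with
  | 0 => 0
  | m + 1 => f m

@[simp] lemma shf_zero (f : ℕ → ℝ) : shf f 0 = 0 := rfl
@[simp] lemma shf_succ (f : ℕ → ℝ) (m : ℕ) : shf f (m + 1) = f m := rfl

lemma nbR (n : ℕ) :
    ((n : ℝ) + 2) * ((2 * n + 2).choose n : ℝ) = ((n : ℝ) + 1) * ((2 * n + 2).choose (n + 1) : ℝ) := by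
  have h := Nat.choose_succ_right_eq (2 * n + 2) n
  rw [show 2 * n + 2 - n = n + 2 by omega] at h
  have : (n + 2) * ((2 * n + 2).choose n) = (n + 1) * ((2 * n + 2).choose (n + 1)) := by
    rw [Nat.mul_comm (n + 2), Nat.mul_comm (n + 1)]; exact h.symm
  exact_mod_cast this

lemma central_le (n : ℕ) : (2 * n).choose n ≤ 4 ^ n := by
  calc (2 * n).choose n ≤ ∑ m ∈ range (2 * n + 1), (2 * n).choose m :=
        Finset.single_le_sum (fun i _ => Nat.zero_le _) (by simp [Finset.mem_range]; omega)
    _ = 2 ^ (2 * n) := Nat.sum_range_choose (2 * n)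
    _ = 4 ^ n := by rw [pow_mul]; norm_num

lemma V1 (t : ℝ) (n : ℕ) :
    ∑ kl ∈ Finset.HasAntidiagonal.antidiagonal n, seqa t kl.1 * seqa t kl.2 = alph t n := by
  have step : ∀ kl ∈ Finset.HasAntidiagonal.antidiagonal n, seqa t kl.1 * seqa t kl.2
      = ((n.choose kl.1 * n.choose kl.2 : ℕ) : ℝ)
        * (t ^ (2 * n) / ((n.factorial : ℝ) * (n.factorial : ℝ))) := by
    rintro ⟨i, j⟩ hij
    rw [Finset.HasAntidiagonal.mem_antidiagonal] at hij
    subst hij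
    have h1 : (((i + j).choose i : ℕ) : ℝ) * (i.factorial : ℝ) * (j.factorial : ℝ)
        = ((i + j).factorial : ℝ) := by
      have := Nat.choose_mul_factorial_mul_factorial (Nat.le_add_right i j)
      rw [Nat.add_sub_cancel_left] at this
      exact_mod_cast this
    have h2 : (((i + j).choose j : ℕ) : ℝ) * (j.factorial : ℝ) * (i.factorial : ℝ)
        = ((i + j).factorial : ℝ) := by
      have := Nat.choose_mul_factorial_mul_factorial (Nat.le_add_left j i)
      rw [Nat.add_sub_cancel] at this
      exact_mod_cast this
    have f1 : (0:ℝ) < (i.factorial : ℝ) := by exact_mod_cast i.factorial_pos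
    have f2 : (0:ℝ) < (j.factorial : ℝ) := by exact_mod_cast j.factorial_pos
    have f3 : (0:ℝ) < ((i + j).factorial : ℝ) := by exact_mod_cast (i + j).factorial_pos
    simp only [seqa]
    rw [div_mul_div_comm, ← pow_add, show 2 * i + 2 * j = 2 * (i + j) by ring,
      mul_div_assoc', div_eq_div_iff (by positivity) (by positivity)]
    push_cast
    linear_combination (-(t ^ (2 * (i + j))) * ((i + j).factorial : ℝ)) * h1
      + (-(t ^ (2 * (i + j))) * (((i + j).choose i : ℕ) : ℝ) * (i.factorial : ℝ) * (j.factorial : ℝ)) * h2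
  rw [Finset.sum_congr rfl step, ← Finset.sum_mul, ← Nat.cast_sum,
    ← Nat.add_choose_eq, show n + n = 2 * n by ring]
  have hn : ((n : ℝ) + 1) ≠ 0 := by positivity
  simp only [alph, gg]
  field_simp

lemma V2 (t : ℝ) (n : ℕ) :
    ∑ kl ∈ Finset.HasAntidiagonal.antidiagonal n, seqb t kl.1 * seqb t kl.2 = bet t n := by
  have step : ∀ kl ∈ Finset.HasAntidiagonal.antidiagonal n, seqb t kl.1 * seqb t kl.2
      = (((n + 1).choose kl.1 * (n + 1).choose kl.2 : ℕ) : ℝ)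
        * (t ^ (2 * n + 2) / (((n + 1).factorial : ℝ) * ((n + 1).factorial : ℝ))) := by
    rintro ⟨i, j⟩ hij
    rw [Finset.HasAntidiagonal.mem_antidiagonal] at hij
    subst hij
    have h1 : (((i + j + 1).choose i : ℕ) : ℝ) * (i.factorial : ℝ) * ((j + 1).factorial : ℝ)
        = ((i + j + 1).factorial : ℝ) := by
      have := Nat.choose_mul_factorial_mul_factorial (show i ≤ i + j + 1 by omega)
      rw [show i + j + 1 - i = j + 1 by omega] at this
      exact_mod_cast this
    have h2 : (((i + j + 1).choose j : ℕ) : ℝ) * (j.factorial : ℝ) * ((i + 1).factorial : ℝ)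
        = ((i + j + 1).factorial : ℝ) := by
      have := Nat.choose_mul_factorial_mul_factorial (show j ≤ i + j + 1 by omega)
      rw [show i + j + 1 - j = i + 1 by omega] at this
      exact_mod_cast this
    have f1 : (0:ℝ) < (i.factorial : ℝ) := by exact_mod_cast i.factorial_pos
    have f2 : (0:ℝ) < (j.factorial : ℝ) := by exact_mod_cast j.factorial_pos
    have f1' : (0:ℝ) < ((i + 1).factorial : ℝ) := by exact_mod_cast (i + 1).factorial_pos
    have f2' : (0:ℝ) < ((j + 1).factorial : ℝ) := by exact_mod_cast (j + 1).factorial_pos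
    have f3 : (0:ℝ) < ((i + j + 1).factorial : ℝ) := by exact_mod_cast (i + j + 1).factorial_pos
    simp only [seqb]
    rw [div_mul_div_comm, ← pow_add, show 2 * i + 1 + (2 * j + 1) = 2 * (i + j) + 2 by ring,
      mul_div_assoc', div_eq_div_iff (by positivity) (by positivity)]
    push_cast
    linear_combination (-(t ^ (2 * (i + j) + 2)) * ((i + j + 1).factorial : ℝ)) * h1
      + (-(t ^ (2 * (i + j) + 2)) * (((i + j + 1).choose i : ℕ) : ℝ) * (i.factorial : ℝ)
          * ((j + 1).factorial : ℝ)) * h2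
  rw [Finset.sum_congr rfl step, ← Finset.sum_mul, ← Nat.cast_sum,
    ← Nat.add_choose_eq, show (n + 1) + (n + 1) = 2 * n + 2 by ring]
  have hnb := nbR n
  have hn1 : ((n : ℝ) + 1) ≠ 0 := by positivity
  have hn2 : ((n : ℝ) + 2) ≠ 0 := by positivity
  have ff : (0:ℝ) < ((n + 1).factorial : ℝ) := by exact_mod_cast (n + 1).factorial_pos
  simp only [bet, gg, show 2 * (n + 1) = 2 * n + 2 by ring]
  push_cast
  field_simp
  linear_combination (t ^ (2 * n + 2)) * hnb

lemma V3 (t : ℝ) (n : ℕ) :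
    ∑ kl ∈ Finset.HasAntidiagonal.antidiagonal n, seqa t kl.1 * seqc t kl.2 = gam t n := by
  have step : ∀ kl ∈ Finset.HasAntidiagonal.antidiagonal n, seqa t kl.1 * seqc t kl.2
      = (((n + 2).choose kl.1 * n.choose kl.2 : ℕ) : ℝ)
        * (t ^ (2 * n + 2) / ((n.factorial : ℝ) * ((n + 2).factorial : ℝ))) := by
    rintro ⟨i, j⟩ hij
    rw [Finset.HasAntidiagonal.mem_antidiagonal] at hij
    subst hij
    have h1 : (((i + j + 2).choose i : ℕ) : ℝ) * (i.factorial : ℝ) * ((j + 2).factorial : ℝ)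
        = ((i + j + 2).factorial : ℝ) := by
      have := Nat.choose_mul_factorial_mul_factorial (show i ≤ i + j + 2 by omega)
      rw [show i + j + 2 - i = j + 2 by omega] at this
      exact_mod_cast this
    have h2 : (((i + j).choose j : ℕ) : ℝ) * (j.factorial : ℝ) * (i.factorial : ℝ)
        = ((i + j).factorial : ℝ) := by
      have := Nat.choose_mul_factorial_mul_factorial (Nat.le_add_left j i)
      rw [Nat.add_sub_cancel] at this
      exact_mod_cast this
    have f1 : (0:ℝ) < (i.factorial : ℝ) := by exact_mod_cast i.factorial_pos
    have f2 : (0:ℝ) < (j.factorial : ℝ) := by exact_mod_cast j.factorial_pos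
    have f2' : (0:ℝ) < ((j + 2).factorial : ℝ) := by exact_mod_cast (j + 2).factorial_pos
    have f3 : (0:ℝ) < ((i + j).factorial : ℝ) := by exact_mod_cast (i + j).factorial_pos
    have f4 : (0:ℝ) < ((i + j + 2).factorial : ℝ) := by exact_mod_cast (i + j + 2).factorial_pos
    simp only [seqa, seqc]
    rw [div_mul_div_comm, ← pow_add, show 2 * i + (2 * j + 2) = 2 * (i + j) + 2 by ring,
      mul_div_assoc', div_eq_div_iff (by positivity) (by positivity)]
    push_cast
    linear_combination (-(t ^ (2 * (i + j) + 2)) * ((i + j).factorial : ℝ)) * h1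
      + (-(t ^ (2 * (i + j) + 2)) * (((i + j + 2).choose i : ℕ) : ℝ) * (i.factorial : ℝ)
          * ((j + 2).factorial : ℝ)) * h2
  rw [Finset.sum_congr rfl step, ← Finset.sum_mul, ← Nat.cast_sum,
    ← Nat.add_choose_eq, show (n + 2) + n = 2 * n + 2 by ring]
  have hnb := nbR n
  have hn1 : ((n : ℝ) + 1) ≠ 0 := by positivity
  have hn2 : ((n : ℝ) + 2) ≠ 0 := by positivity
  have ff : (0:ℝ) < ((n + 1).factorial : ℝ) := by exact_mod_cast (n + 1).factorial_pos
  have ff0 : (0:ℝ) < (n.factorial : ℝ) := by exact_mod_cast n.factorial_pos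
  simp only [gam, gg, show 2 * (n + 1) = 2 * n + 2 by ring]
  rw [show (n + 2).factorial = (n + 2) * ((n + 1) * n.factorial) by
        rw [Nat.factorial_succ, Nat.factorial_succ],
      show (n + 1).factorial = (n + 1) * n.factorial from Nat.factorial_succ n]
  push_cast
  field_simp
  linear_combination (t ^ (2 * n + 2)) * hnb

lemma frac_ineq (K B : ℝ) (hK : 0 ≤ K) (hB : 0 ≤ B) :
    (K + 1) * (B / (B + 1)) + (B + 1) * (K / (K + 1)) ≤ K + B := by
  have hB1 : (0:ℝ) < B + 1 := by linarith
  have hK1 : (0:ℝ) < K + 1 := by linarith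
  have h : (K + 1) * (B / (B + 1)) + (B + 1) * (K / (K + 1))
      = (K + B) - (K - B) ^ 2 / ((K + 1) * (B + 1)) := by
    field_simp
    ring
  rw [h]
  have h2 : (0:ℝ) ≤ (K - B) ^ 2 / ((K + 1) * (B + 1)) := by positivity
  linarith

lemma key (G : ℕ → ℝ) (hG : ∀ m, 0 ≤ G m) (n : ℕ) :
    ∑ k ∈ Finset.range (n + 1),
        (((k : ℝ) + 1) * G k) * ((((n - k : ℕ) : ℝ) + 1) / (((n - k : ℕ) : ℝ) + 2) * G (n - k + 1))
      ≤ ∑ k ∈ Finset.range (n + 1), (((k : ℝ) + 1) * G (k + 1)) * G (n - k) := by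
  set E : ℕ → ℝ := fun k =>
    ((k : ℝ) + 1) * G k * ((((n + 1 - k : ℕ) : ℝ)) / (((n + 1 - k : ℕ) : ℝ) + 1) * G (n + 1 - k))
    with hE
  set F : ℕ → ℝ := fun k => (k : ℝ) * G k * G (n + 1 - k) with hF
  have hLHS : ∑ k ∈ Finset.range (n + 1),
      (((k : ℝ) + 1) * G k) * ((((n - k : ℕ) : ℝ) + 1) / (((n - k : ℕ) : ℝ) + 2) * G (n - k + 1))
      = ∑ k ∈ Finset.range (n + 2), E k := by
    have hEtop : E (n + 1) = 0 := by
      simp [hE, Nat.sub_self]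
    rw [Finset.sum_range_succ E (n + 1), hEtop, add_zero]
    apply Finset.sum_congr rfl
    intro k hk
    rw [Finset.mem_range] at hk
    have hk' : k ≤ n := by omega
    have h1 : n + 1 - k = (n - k) + 1 := by omega
    simp only [hE, h1]
    push_cast
    ring
  have hRHS : ∑ k ∈ Finset.range (n + 1), (((k : ℝ) + 1) * G (k + 1)) * G (n - k)
      = ∑ k ∈ Finset.range (n + 2), F k := by
    have hF0 : F 0 = 0 := by simp [hF]
    rw [Finset.sum_range_succ' F (n + 1), hF0, add_zero]
    apply Finset.sum_congr rfl
    intro k hk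
    simp only [hF, Nat.succ_sub_succ_eq_sub]
    push_cast
    ring
  rw [hLHS, hRHS]
  have hrefl_E : ∑ k ∈ Finset.range (n + 2), E (n + 1 - k) = ∑ k ∈ Finset.range (n + 2), E k := by
    have := Finset.sum_range_reflect E (n + 2)
    simpa using this
  have hrefl_F : ∑ k ∈ Finset.range (n + 2), F (n + 1 - k) = ∑ k ∈ Finset.range (n + 2), F k := by
    have := Finset.sum_range_reflect F (n + 2)
    simpa using this
  have hpair : ∀ k ∈ Finset.range (n + 2), E k + E (n + 1 - k) ≤ F k + F (n + 1 - k) := by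
    intro k hk
    rw [Finset.mem_range] at hk
    have hkn : k ≤ n + 1 := by omega
    have hb : n + 1 - (n + 1 - k) = k := by omega
    simp only [hE, hF, hb]
    have hGk := hG k
    have hGb := hG (n + 1 - k)
    have hK : (0:ℝ) ≤ (k : ℝ) := by positivity
    have hB : (0:ℝ) ≤ ((n + 1 - k : ℕ) : ℝ) := by positivity
    have hfrac := frac_ineq (k : ℝ) ((n + 1 - k : ℕ) : ℝ) hK hB
    set K := (k : ℝ)
    set B := ((n + 1 - k : ℕ) : ℝ)
    have expand : (K + 1) * G k * (B / (B + 1) * G (n + 1 - k))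
        + (B + 1) * G (n + 1 - k) * (K / (K + 1) * G k)
        = (G k * G (n + 1 - k)) * ((K + 1) * (B / (B + 1)) + (B + 1) * (K / (K + 1))) := by
      ring
    have expand2 : K * G k * G (n + 1 - k) + B * G (n + 1 - k) * G k
        = (G k * G (n + 1 - k)) * (K + B) := by ring
    rw [expand, expand2]
    exact mul_le_mul_of_nonneg_left hfrac (by positivity)
  have hsum := Finset.sum_le_sum hpair
  rw [Finset.sum_add_distrib, Finset.sum_add_distrib, hrefl_E, hrefl_F] at hsum
  linarith

set_option linter.unusedSectionVars false

section reps
variable {x : ℝ} (hx : 0 < x)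

lemma rep0 : besselI 0 x = ∑' n, seqa (x / 2) n := by
  unfold besselI
  apply tsum_congr
  intro m
  rw [show (2 * (m : ℝ) + 0 : ℝ) = ((2 * m : ℕ) : ℝ) by push_cast; ring, Real.rpow_natCast]
  rw [show ((m : ℝ) + 0 + 1) = ((m : ℝ) + 1) by ring, Real.Gamma_nat_eq_factorial]
  rfl

lemma rep1 : besselI 1 x = ∑' n, seqb (x / 2) n := by
  unfold besselI
  apply tsum_congr
  intro m
  rw [show (2 * (m : ℝ) + 1 : ℝ) = ((2 * m + 1 : ℕ) : ℝ) by push_cast; ring, Real.rpow_natCast]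
  rw [show ((m : ℝ) + 1 + 1) = (((m + 1 : ℕ) : ℝ) + 1) by push_cast; ring,
    Real.Gamma_nat_eq_factorial]
  rfl

lemma rep2 : besselI 2 x = ∑' n, seqc (x / 2) n := by
  unfold besselI
  apply tsum_congr
  intro m
  rw [show (2 * (m : ℝ) + 2 : ℝ) = ((2 * m + 2 : ℕ) : ℝ) by push_cast; ring, Real.rpow_natCast]
  rw [show ((m : ℝ) + 2 + 1) = (((m + 2 : ℕ) : ℝ) + 1) by push_cast; ring,
    Real.Gamma_nat_eq_factorial]
  rfl

end reps

section summab
variable {t : ℝ} (ht : 0 < t)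

lemma fact_pos_real (n : ℕ) : (0:ℝ) < (n.factorial : ℝ) := by exact_mod_cast n.factorial_pos
lemma fact_one_le (n : ℕ) : (1:ℝ) ≤ (n.factorial : ℝ) := by exact_mod_cast n.factorial_pos

include ht

lemma gg_nonneg (n : ℕ) : 0 ≤ gg t n := by
  unfold gg; positivity

lemma alph_le (n : ℕ) : alph t n ≤ (4 * t ^ 2) ^ n / (n.factorial : ℝ) := by
  unfold alph gg
  have hn1 : (0:ℝ) < (n : ℝ) + 1 := by positivity
  have hf := fact_pos_real n
  have key : ((n:ℝ) + 1) * (((2 * n).choose n : ℝ) * t ^ (2 * n)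
      / (((n : ℝ) + 1) * ((n.factorial : ℝ) * (n.factorial : ℝ))))
      = ((2 * n).choose n : ℝ) * t ^ (2 * n) / ((n.factorial : ℝ) * (n.factorial : ℝ)) := by
    field_simp
  rw [key]
  have hc : ((2 * n).choose n : ℝ) ≤ (4 : ℝ) ^ n := by exact_mod_cast central_le n
  have hpow : t ^ (2 * n) = (t ^ 2) ^ n := by rw [← pow_mul]
  rw [hpow, show ((4 * t ^ 2) ^ n : ℝ) = 4 ^ n * (t ^ 2) ^ n from mul_pow 4 (t ^ 2) n]
  apply div_le_div₀ (by positivity) _ (fact_pos_real n)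
  · nlinarith [fact_one_le n, fact_pos_real n]
  · have h2 : (0:ℝ) ≤ (t ^ 2) ^ n := by positivity
    nlinarith [h2, hc]

lemma summable_of_bound (f : ℕ → ℝ) (c r : ℝ) (h0 : ∀ n, 0 ≤ f n)
    (h : ∀ n, f n ≤ c * (r ^ n / (n.factorial : ℝ))) : Summable f :=
  Summable.of_nonneg_of_le h0 h (by
    simpa [mul_div_assoc] using (Real.summable_pow_div_factorial r).mul_left c)

lemma summable_alph : Summable (alph t) :=
  summable_of_bound ht (alph t) 1 (4 * t ^ 2)
    (fun n => by unfold alph; have := gg_nonneg ht n; positivity)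
    (fun n => by simpa using alph_le ht n)

lemma gg_le_alph (n : ℕ) : gg t n ≤ alph t n := by
  unfold alph
  nlinarith [gg_nonneg ht n, Nat.cast_nonneg (α := ℝ) n]

lemma summable_gg : Summable (gg t) :=
  Summable.of_nonneg_of_le (gg_nonneg ht) (gg_le_alph ht) (summable_alph ht)

lemma bet_le (n : ℕ) : bet t n ≤ (4 * t ^ 2) * ((4 * t ^ 2) ^ n / (n.factorial : ℝ)) := by
  unfold bet
  have h1 : ((n : ℝ) + 1) * gg t (n + 1) ≤ ((n : ℝ) + 2) * gg t (n + 1) := by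
    nlinarith [gg_nonneg ht (n + 1)]
  have h2 : ((n : ℝ) + 2) * gg t (n + 1) = alph t (n + 1) := by
    unfold alph; push_cast; ring
  have h3 := alph_le ht (n + 1)
  have hfle : (n.factorial : ℝ) ≤ ((n + 1).factorial : ℝ) := by
    exact_mod_cast Nat.factorial_le (Nat.le_succ n)
  have h4 : (4 * t ^ 2) ^ (n + 1) / ((n + 1).factorial : ℝ)
      ≤ (4 * t ^ 2) * ((4 * t ^ 2) ^ n / (n.factorial : ℝ)) := by
    calc (4 * t ^ 2) ^ (n + 1) / ((n + 1).factorial : ℝ)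
        ≤ (4 * t ^ 2) ^ (n + 1) / (n.factorial : ℝ) :=
          div_le_div_of_nonneg_left (by positivity) (fact_pos_real n) hfle
      _ = (4 * t ^ 2) * ((4 * t ^ 2) ^ n / (n.factorial : ℝ)) := by
          rw [pow_succ]; ring
  calc ((n : ℝ) + 1) * gg t (n + 1) ≤ alph t (n + 1) := by rw [← h2]; exact h1
    _ ≤ (4 * t ^ 2) ^ (n + 1) / ((n + 1).factorial : ℝ) := h3
    _ ≤ (4 * t ^ 2) * ((4 * t ^ 2) ^ n / (n.factorial : ℝ)) := h4

lemma summable_bet : Summable (bet t) :=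
  summable_of_bound ht (bet t) (4 * t ^ 2) (4 * t ^ 2)
    (fun n => by unfold bet; have := gg_nonneg ht (n + 1); positivity)
    (bet_le ht)

lemma qq_le_bet (n : ℕ) : qq t n ≤ bet t n := by
  unfold qq bet
  have hg := gg_nonneg ht (n + 1)
  have h1 : ((n : ℝ) + 1) / ((n : ℝ) + 2) ≤ ((n : ℝ) + 1) := by
    rw [div_le_iff₀ (by positivity)]
    nlinarith [Nat.cast_nonneg (α := ℝ) n]
  nlinarith [hg, h1]

lemma qq_nonneg (n : ℕ) : 0 ≤ qq t n := by
  unfold qq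
  have := gg_nonneg ht (n + 1)
  positivity

lemma summable_qq : Summable (qq t) :=
  Summable.of_nonneg_of_le (qq_nonneg ht) (qq_le_bet ht) (summable_bet ht)

lemma gam_le_bet (n : ℕ) : gam t n ≤ bet t n := by
  unfold gam bet
  have hg := gg_nonneg ht (n + 1)
  have h1 : ((n : ℝ) + 1) ^ 2 / ((n : ℝ) + 2) ≤ ((n : ℝ) + 1) := by
    rw [div_le_iff₀ (by positivity)]
    nlinarith [Nat.cast_nonneg (α := ℝ) n]
  nlinarith [hg, h1]

lemma gam_nonneg (n : ℕ) : 0 ≤ gam t n := by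
  unfold gam
  have := gg_nonneg ht (n + 1)
  positivity

lemma summable_gam : Summable (gam t) :=
  Summable.of_nonneg_of_le (gam_nonneg ht) (gam_le_bet ht) (summable_bet ht)

lemma seqa_nonneg (n : ℕ) : 0 ≤ seqa t n := by unfold seqa; positivity
lemma seqb_nonneg (n : ℕ) : 0 ≤ seqb t n := by unfold seqb; positivity
lemma seqc_nonneg (n : ℕ) : 0 ≤ seqc t n := by unfold seqc; positivity

lemma summable_seqa : Summable (seqa t) := by
  apply summable_of_bound ht (seqa t) 1 (t ^ 2) (seqa_nonneg ht)
  intro n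
  unfold seqa
  rw [one_mul, ← pow_mul]
  apply div_le_div₀ (by positivity) le_rfl (fact_pos_real n)
  nlinarith [fact_one_le n, fact_pos_real n]

lemma summable_seqb : Summable (seqb t) := by
  apply summable_of_bound ht (seqb t) t (t ^ 2) (seqb_nonneg ht)
  intro n
  unfold seqb
  have h1 : t ^ (2 * n + 1) = t * (t ^ 2) ^ n := by rw [← pow_mul, pow_succ]; ring
  rw [h1, mul_div_assoc]
  have hle : (0:ℝ) < (n.factorial : ℝ) * ((n + 1).factorial : ℝ) := by
    have := fact_pos_real n; have := fact_pos_real (n + 1); positivity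
  apply mul_le_mul_of_nonneg_left _ (le_of_lt ht)
  apply div_le_div₀ (by positivity) le_rfl (fact_pos_real n)
  nlinarith [fact_one_le (n + 1), fact_pos_real n]

lemma summable_seqc : Summable (seqc t) := by
  apply summable_of_bound ht (seqc t) (t ^ 2) (t ^ 2) (seqc_nonneg ht)
  intro n
  unfold seqc
  have h1 : t ^ (2 * n + 2) = t ^ 2 * (t ^ 2) ^ n := by rw [← pow_mul]; ring
  rw [h1, mul_div_assoc]
  apply mul_le_mul_of_nonneg_left _ (by positivity)
  apply div_le_div₀ (by positivity) le_rfl (fact_pos_real n)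
  nlinarith [fact_one_le (n + 2), fact_pos_real n]

end summab

end Turan

theorem stmt_5 (x : ℝ) (hx : 0 < x) :
    (besselI 1 x) ^ 4 < (besselI 0 x) ^ 3 * besselI 2 x := by
  rw [Turan.rep0, Turan.rep1, Turan.rep2]
  have ht : 0 < x / 2 := by linarith
  set t := x / 2 with htdef
  -- summability facts
  have sa := Turan.summable_seqa ht
  have sb := Turan.summable_seqb ht
  have sc := Turan.summable_seqc ht
  have sal := Turan.summable_alph ht
  have sbe := Turan.summable_bet ht
  have sga := Turan.summable_gam ht
  have sgg := Turan.summable_gg ht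
  have sqq := Turan.summable_qq ht
  have haln : ∀ n, 0 ≤ Turan.alph t n := fun n =>
    mul_nonneg (by positivity) (Turan.gg_nonneg ht n)
  have hben : ∀ n, 0 ≤ Turan.bet t n := fun n =>
    mul_nonneg (by positivity) (Turan.gg_nonneg ht (n + 1))
  have hnorm : ∀ (f : ℕ → ℝ), (∀ n, 0 ≤ f n) → (fun n => ‖f n‖) = f := fun f h =>
    funext fun n => Real.norm_of_nonneg (h n)
  have na : Summable fun n => ‖Turan.seqa t n‖ := by
    rw [hnorm _ (Turan.seqa_nonneg ht)]; exact sa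
  have nb : Summable fun n => ‖Turan.seqb t n‖ := by
    rw [hnorm _ (Turan.seqb_nonneg ht)]; exact sb
  have nc : Summable fun n => ‖Turan.seqc t n‖ := by
    rw [hnorm _ (Turan.seqc_nonneg ht)]; exact sc
  have nal : Summable fun n => ‖Turan.alph t n‖ := by rw [hnorm _ haln]; exact sal
  have nbe : Summable fun n => ‖Turan.bet t n‖ := by rw [hnorm _ hben]; exact sbe
  have ngg : Summable fun n => ‖Turan.gg t n‖ := by
    rw [hnorm _ (Turan.gg_nonneg ht)]; exact sgg
  have nqq : Summable fun n => ‖Turan.qq t n‖ := by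
    rw [hnorm _ (Turan.qq_nonneg ht)]; exact sqq
  -- Cauchy products
  have e1 : (∑' n, Turan.seqa t n) * (∑' n, Turan.seqa t n) = ∑' n, Turan.alph t n := by
    rw [tsum_mul_tsum_eq_tsum_sum_antidiagonal_of_summable_norm na na]
    exact tsum_congr (Turan.V1 t)
  have e2 : (∑' n, Turan.seqb t n) * (∑' n, Turan.seqb t n) = ∑' n, Turan.bet t n := by
    rw [tsum_mul_tsum_eq_tsum_sum_antidiagonal_of_summable_norm nb nb]
    exact tsum_congr (Turan.V2 t)
  have e3 : (∑' n, Turan.seqa t n) * (∑' n, Turan.seqc t n) = ∑' n, Turan.gam t n := by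
    rw [tsum_mul_tsum_eq_tsum_sum_antidiagonal_of_summable_norm na nc]
    exact tsum_congr (Turan.V3 t)
  -- K1 : A² - B² = ∑ gg
  have sshf : Summable (Turan.shf (Turan.bet t)) := by
    have hfun : (fun n => Turan.shf (Turan.bet t) (n + 1)) = Turan.bet t :=
      funext fun n => rfl
    exact (summable_nat_add_iff 1).mp (hfun ▸ sbe)
  have eshift : ∑' n, Turan.shf (Turan.bet t) n = ∑' n, Turan.bet t n := by
    rw [Summable.tsum_eq_zero_add sshf]; simp
  have K1 : (∑' n, Turan.seqa t n) * (∑' n, Turan.seqa t n)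
      - (∑' n, Turan.seqb t n) * (∑' n, Turan.seqb t n) = ∑' n, Turan.gg t n := by
    rw [e1, e2, ← eshift, ← Summable.tsum_sub sal sshf]
    apply tsum_congr
    intro n
    cases n with
    | zero => simp [Turan.alph]
    | succ m =>
        simp only [Turan.shf_succ, Turan.alph, Turan.bet]
        push_cast
        ring
  have K2 : (∑' n, Turan.seqb t n) * (∑' n, Turan.seqb t n)
      - (∑' n, Turan.seqa t n) * (∑' n, Turan.seqc t n) = ∑' n, Turan.qq t n := by
    rw [e2, e3, ← Summable.tsum_sub sbe sga]
    apply tsum_congr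
    intro n
    simp only [Turan.bet, Turan.gam, Turan.qq]
    have h2 : ((n : ℝ) + 2) ≠ 0 := by positivity
    field_simp
    ring
  -- products 4 and 5, and the strict inequality
  have e4 : (∑' n, Turan.bet t n) * (∑' n, Turan.gg t n)
      = ∑' n, ∑ kl ∈ Finset.HasAntidiagonal.antidiagonal n, Turan.bet t kl.1 * Turan.gg t kl.2 :=
    tsum_mul_tsum_eq_tsum_sum_antidiagonal_of_summable_norm nbe ngg
  have e5 : (∑' n, Turan.alph t n) * (∑' n, Turan.qq t n)
      = ∑' n, ∑ kl ∈ Finset.HasAntidiagonal.antidiagonal n, Turan.alph t kl.1 * Turan.qq t kl.2 :=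
    tsum_mul_tsum_eq_tsum_sum_antidiagonal_of_summable_norm nal nqq
  have hu : Summable (fun n => ∑ kl ∈ Finset.HasAntidiagonal.antidiagonal n, Turan.bet t kl.1 * Turan.gg t kl.2) :=
    (summable_norm_sum_mul_antidiagonal_of_summable_norm nbe ngg).of_norm
  have hvle : ∀ n, (∑ kl ∈ Finset.HasAntidiagonal.antidiagonal n, Turan.alph t kl.1 * Turan.qq t kl.2)
      ≤ ∑ kl ∈ Finset.HasAntidiagonal.antidiagonal n, Turan.bet t kl.1 * Turan.gg t kl.2 := by
    intro n
    rw [Finset.Nat.sum_antidiagonal_eq_sum_range_succ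
        (fun i j => Turan.alph t i * Turan.qq t j) n,
      Finset.Nat.sum_antidiagonal_eq_sum_range_succ
        (fun i j => Turan.bet t i * Turan.gg t j) n]
    have := Turan.key (Turan.gg t) (Turan.gg_nonneg ht) n
    simpa only [Turan.alph, Turan.bet, Turan.qq] using this
  have hv0 : ∀ n, 0 ≤ ∑ kl ∈ Finset.HasAntidiagonal.antidiagonal n, Turan.alph t kl.1 * Turan.qq t kl.2 :=
    fun n => Finset.sum_nonneg fun kl _ => mul_nonneg (haln _) (Turan.qq_nonneg ht _)
  have hgg0 : Turan.gg t 0 = 1 := by norm_num [Turan.gg]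
  have hgg1 : Turan.gg t 1 = t ^ 2 := by norm_num [Turan.gg, Nat.choose_one_right]
  have hi : (∑ kl ∈ Finset.HasAntidiagonal.antidiagonal 0, Turan.alph t kl.1 * Turan.qq t kl.2)
      < ∑ kl ∈ Finset.HasAntidiagonal.antidiagonal 0, Turan.bet t kl.1 * Turan.gg t kl.2 := by
    rw [Finset.Nat.antidiagonal_zero]
    simp only [Finset.sum_singleton, Turan.alph, Turan.bet, Turan.qq, hgg0, hgg1]
    norm_num
    nlinarith [sq_nonneg t, ht]
  have hlt : (∑' n, ∑ kl ∈ Finset.HasAntidiagonal.antidiagonal n, Turan.alph t kl.1 * Turan.qq t kl.2)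
      < ∑' n, ∑ kl ∈ Finset.HasAntidiagonal.antidiagonal n, Turan.bet t kl.1 * Turan.gg t kl.2 :=
    Summable.tsum_lt_tsum_of_nonneg hv0 hvle hi hu
  -- final algebra
  set A := ∑' n, Turan.seqa t n
  set B := ∑' n, Turan.seqb t n
  set C := ∑' n, Turan.seqc t n
  have hring : A ^ 3 * C - B ^ 4 = (B * B) * (A * A - B * B) - (A * A) * (B * B - A * C) := by
    ring
  rw [K1, K2] at hring
  have h6 : (B * B) * (∑' n, Turan.gg t n)
      = ∑' n, ∑ kl ∈ Finset.HasAntidiagonal.antidiagonal n, Turan.bet t kl.1 * Turan.gg t kl.2 := by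
    rw [e2, e4]
  have h7 : (A * A) * (∑' n, Turan.qq t n)
      = ∑' n, ∑ kl ∈ Finset.HasAntidiagonal.antidiagonal n, Turan.alph t kl.1 * Turan.qq t kl.2 := by
    rw [e1, e5]
  rw [h6, h7] at hring
  linarith [hlt, hring]
end

section
/- For all x > 0 one has 2 < λ(x) < 4, where λ(x) = log(1 − (2/x)·Ψ(x)) / log Ψ(x) and Ψ(x) = I₁(x)/I₀(x). (Here 0 < Ψ(x) < 1 and 0 < 1 − (2/x)·Ψ(x) < 1 for x > 0, so λ(x) is well defined and positive.) -/
open Real Filter Topology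

open Finset

namespace Stmt6Aux

/-- real cast of factorial -/
noncomputable def F (m : ℕ) : ℝ := (Nat.factorial m : ℝ)

lemma F_pos (m : ℕ) : 0 < F m := by
  unfold F; exact_mod_cast m.factorial_pos

lemma F_succ (m : ℕ) : F (m + 1) = (m + 1) * F m := by
  unfold F; exact_mod_cast m.factorial_succ

/-! ### Coefficients -/

noncomputable def a0 (m : ℕ) : ℝ := 1 / (F m * F m)
noncomputable def a1 (m : ℕ) : ℝ := 1 / (F m * F (m + 1))
noncomputable def a2 (m : ℕ) : ℝ := 1 / (F m * F (m + 2))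

noncomputable def pp (k : ℕ) : ℝ := F (2 * k + 2) / (F k * F (k + 2) * (F (k + 1) * F (k + 1)))
noncomputable def qq (k : ℕ) : ℝ := F (2 * k + 2) / (F k * F (k + 2) * (F k * F (k + 2)))
noncomputable def rr (k : ℕ) : ℝ := F (2 * k) / (F k * F k * (F k * F k))

lemma a0_pos (m : ℕ) : 0 < a0 m :=
  div_pos one_pos (mul_pos (F_pos m) (F_pos m))
lemma a1_pos (m : ℕ) : 0 < a1 m :=
  div_pos one_pos (mul_pos (F_pos m) (F_pos (m + 1)))
lemma a2_pos (m : ℕ) : 0 < a2 m :=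
  div_pos one_pos (mul_pos (F_pos m) (F_pos (m + 2)))
lemma pp_pos (k : ℕ) : 0 < pp k :=
  div_pos (F_pos _) (mul_pos (mul_pos (F_pos _) (F_pos _)) (mul_pos (F_pos _) (F_pos _)))
lemma qq_pos (k : ℕ) : 0 < qq k :=
  div_pos (F_pos _) (mul_pos (mul_pos (F_pos _) (F_pos _)) (mul_pos (F_pos _) (F_pos _)))
lemma rr_pos (k : ℕ) : 0 < rr k :=
  div_pos (F_pos _) (mul_pos (mul_pos (F_pos _) (F_pos _)) (mul_pos (F_pos _) (F_pos _)))

lemma F_succ' (k : ℕ) : F (k + 1) = ((k : ℝ) + 1) * F k := by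
  have := F_succ k; push_cast at this ⊢; linarith

lemma F_succ'' (k : ℕ) : F (k + 2) = ((k : ℝ) + 2) * F (k + 1) := by
  have := F_succ (k + 1); push_cast at this ⊢; linarith

lemma qq_eq (k : ℕ) : qq k = pp k * (((k : ℝ) + 1) / ((k : ℝ) + 2)) := by
  unfold qq pp
  rw [F_succ'' k, F_succ' k]
  have hk := (F_pos k).ne'
  have h1 : ((k : ℝ) + 1) ≠ 0 := by positivity
  have h2 : ((k : ℝ) + 2) ≠ 0 := by positivity
  field_simp

lemma rr_succ (k : ℕ) : rr (k + 1) = pp k * (((k : ℝ) + 2) / ((k : ℝ) + 1)) := by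
  unfold rr pp
  have he : 2 * (k + 1) = 2 * k + 2 := by ring
  rw [he, F_succ'' k, F_succ' k]
  have hk := (F_pos k).ne'
  have h1 : ((k : ℝ) + 1) ≠ 0 := by positivity
  have h2 : ((k : ℝ) + 2) ≠ 0 := by positivity
  field_simp

/-- The key AM–GM inequality between coefficients. -/
lemma key_amgm (i j : ℕ) : 2 * (pp i * pp j) ≤ qq i * rr (j + 1) + qq j * rr (i + 1) := by
  rw [qq_eq i, qq_eq j, rr_succ i, rr_succ j]
  have hPi := pp_pos i
  have hPj := pp_pos j
  set P := pp i
  set Q := pp j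
  set a : ℝ := (i : ℝ) + 1 with ha
  set b : ℝ := (i : ℝ) + 2 with hb
  set c : ℝ := (j : ℝ) + 1 with hc
  set d : ℝ := (j : ℝ) + 2 with hd
  have hA : (0:ℝ) < a := by rw [ha]; positivity
  have hB : (0:ℝ) < b := by rw [hb]; positivity
  have hC : (0:ℝ) < c := by rw [hc]; positivity
  have hD : (0:ℝ) < d := by rw [hd]; positivity
  have hratio : 2 ≤ a / b * (d / c) + c / d * (b / a) := by
    rw [div_mul_div_comm, div_mul_div_comm, div_add_div _ _ (by positivity) (by positivity),
      le_div_iff₀ (by positivity)]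
    nlinarith [sq_nonneg (a * d - b * c)]
  calc 2 * (P * Q) ≤ (P * Q) * (a / b * (d / c) + c / d * (b / a)) := by
        nlinarith [mul_pos hPi hPj]
    _ = P * (a / b) * (Q * (d / c)) + Q * (c / d) * (P * (b / a)) := by ring

/-! ### Vandermonde identities -/

lemma nat_vander1 (k : ℕ) :
    ∑ i ∈ range (k + 1), (k + 1).choose i * (k + 1).choose (k - i) = (2 * k + 2).choose k := by
  have h := Nat.add_choose_eq (k + 1) (k + 1) k
  rw [Finset.Nat.sum_antidiagonal_eq_sum_range_succ_mk] at h
  rw [← h]; congr 1; ring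

lemma nat_vander2 (k : ℕ) :
    ∑ i ∈ range (k + 1), (k + 2).choose i * k.choose (k - i) = (2 * k + 2).choose k := by
  have h := Nat.add_choose_eq (k + 2) k k
  rw [Finset.Nat.sum_antidiagonal_eq_sum_range_succ_mk] at h
  rw [← h]; congr 1; ring

lemma nat_vander3 (k : ℕ) :
    ∑ i ∈ range (k + 1), k.choose i * k.choose (k - i) = (2 * k).choose k := by
  have h := Nat.add_choose_eq k k k
  rw [Finset.Nat.sum_antidiagonal_eq_sum_range_succ_mk] at h
  rw [← h]; congr 1; ring

lemma cast_choose' {a b : ℕ} (h : a ≤ b) :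
    (b.choose a : ℝ) = F b / (F a * F (b - a)) :=
  Nat.cast_choose ℝ h

lemma vander1 (k : ℕ) : ∑ i ∈ range (k + 1), a1 i * a1 (k - i) = pp k := by
  have hterm : ∀ i ∈ range (k + 1), a1 i * a1 (k - i) =
      (((k + 1).choose i * (k + 1).choose (k - i) : ℕ) : ℝ) / (F (k + 1) * F (k + 1)) := by
    intro i hi
    have hik : i ≤ k := by simpa using Nat.lt_succ_iff.mp (mem_range.mp hi)
    have h1 : ((k + 1).choose i : ℝ) = F (k + 1) / (F i * F ((k - i) + 1)) := by
      rw [cast_choose' (show i ≤ k + 1 by omega), show k + 1 - i = (k - i) + 1 from by omega]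
    have h2 : ((k + 1).choose (k - i) : ℝ) = F (k + 1) / (F (k - i) * F (i + 1)) := by
      rw [cast_choose' (show k - i ≤ k + 1 by omega), show k + 1 - (k - i) = i + 1 from by omega]
    push_cast
    rw [h1, h2]
    unfold a1
    have := (F_pos i).ne'; have := (F_pos (i + 1)).ne'; have := (F_pos (k - i)).ne'
    have := (F_pos ((k - i) + 1)).ne'; have := (F_pos (k + 1)).ne'
    field_simp
  rw [Finset.sum_congr rfl hterm, ← Finset.sum_div, ← Nat.cast_sum, nat_vander1]
  unfold pp
  rw [cast_choose' (by omega), show 2 * k + 2 - k = k + 2 by omega]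
  rw [div_div]

lemma vander2 (k : ℕ) : ∑ i ∈ range (k + 1), a0 i * a2 (k - i) = qq k := by
  have hterm : ∀ i ∈ range (k + 1), a0 i * a2 (k - i) =
      (((k + 2).choose i * k.choose (k - i) : ℕ) : ℝ) / (F k * F (k + 2)) := by
    intro i hi
    have hik : i ≤ k := by simpa using Nat.lt_succ_iff.mp (mem_range.mp hi)
    have h1 : ((k + 2).choose i : ℝ) = F (k + 2) / (F i * F ((k - i) + 2)) := by
      rw [cast_choose' (show i ≤ k + 2 by omega), show k + 2 - i = (k - i) + 2 from by omega]
    have h2 : (k.choose (k - i) : ℝ) = F k / (F (k - i) * F i) := by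
      rw [cast_choose' (show k - i ≤ k by omega), show k - (k - i) = i from by omega]
    push_cast
    rw [h1, h2]
    unfold a0 a2
    have := (F_pos i).ne'; have := (F_pos (k - i)).ne'
    have := (F_pos ((k - i) + 2)).ne'; have := (F_pos k).ne'; have := (F_pos (k + 2)).ne'
    field_simp
  rw [Finset.sum_congr rfl hterm, ← Finset.sum_div, ← Nat.cast_sum, nat_vander2]
  unfold qq
  rw [cast_choose' (by omega), show 2 * k + 2 - k = k + 2 by omega]
  rw [div_div]

lemma vander3 (k : ℕ) : ∑ i ∈ range (k + 1), a0 i * a0 (k - i) = rr k := by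
  have hterm : ∀ i ∈ range (k + 1), a0 i * a0 (k - i) =
      ((k.choose i * k.choose (k - i) : ℕ) : ℝ) / (F k * F k) := by
    intro i hi
    have hik : i ≤ k := by simpa using Nat.lt_succ_iff.mp (mem_range.mp hi)
    have h1 : (k.choose i : ℝ) = F k / (F i * F (k - i)) := by
      rw [cast_choose' (by omega)]
    have h2 : (k.choose (k - i) : ℝ) = F k / (F (k - i) * F i) := by
      rw [cast_choose' (show k - i ≤ k by omega), show k - (k - i) = i from by omega]
    push_cast
    rw [h1, h2]
    unfold a0
    have := (F_pos i).ne'; have := (F_pos (k - i)).ne'; have := (F_pos k).ne'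
    field_simp
  rw [Finset.sum_congr rfl hterm, ← Finset.sum_div, ← Nat.cast_sum, nat_vander3]
  unfold rr
  rw [cast_choose' (by omega), show 2 * k - k = k by omega]
  rw [div_div]

/-! ### Series machinery -/

section Series

variable {y : ℝ} (hy : 0 < y)

lemma F_ge_one (m : ℕ) : (1 : ℝ) ≤ F m := by
  unfold F; exact_mod_cast m.factorial_pos

include hy in
lemma summable_of_le_fact {c : ℕ → ℝ} (h0 : ∀ m, 0 ≤ c m) (hb : ∀ m, c m ≤ 1 / F m) :
    Summable (fun m => c m * y ^ m) := by
  apply Summable.of_nonneg_of_le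
    (fun m => mul_nonneg (h0 m) (pow_nonneg hy.le m))
    (fun m => ?_) (Real.summable_pow_div_factorial y)
  calc c m * y ^ m ≤ (1 / F m) * y ^ m :=
        mul_le_mul_of_nonneg_right (hb m) (pow_nonneg hy.le m)
    _ = y ^ m / (Nat.factorial m : ℝ) := by unfold F; ring

lemma a0_le (m : ℕ) : a0 m ≤ 1 / F m := by
  unfold a0
  apply div_le_div_of_nonneg_left one_pos.le (F_pos m)
  exact le_mul_of_one_le_right (F_pos m).le (F_ge_one m)

lemma a1_le (m : ℕ) : a1 m ≤ 1 / F m := by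
  unfold a1
  apply div_le_div_of_nonneg_left one_pos.le (F_pos m)
  exact le_mul_of_one_le_right (F_pos m).le (F_ge_one (m + 1))

lemma a2_le (m : ℕ) : a2 m ≤ 1 / F m := by
  unfold a2
  apply div_le_div_of_nonneg_left one_pos.le (F_pos m)
  exact le_mul_of_one_le_right (F_pos m).le (F_ge_one (m + 2))

include hy in
lemma summable_a0 : Summable (fun m => a0 m * y ^ m) :=
  summable_of_le_fact hy (fun m => (a0_pos m).le) a0_le

include hy in
lemma summable_a1 : Summable (fun m => a1 m * y ^ m) :=
  summable_of_le_fact hy (fun m => (a1_pos m).le) a1_le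

include hy in
lemma summable_a2 : Summable (fun m => a2 m * y ^ m) :=
  summable_of_le_fact hy (fun m => (a2_pos m).le) a2_le

lemma norm_summable {f : ℕ → ℝ} (h : Summable f) (hf : ∀ n, 0 ≤ f n) :
    Summable fun n => ‖f n‖ :=
  h.congr fun n => (Real.norm_of_nonneg (hf n)).symm

/-- Convolution coefficient computation. -/
lemma conv_eq {b c w : ℕ → ℝ}
    (hw : ∀ k, ∑ i ∈ range (k + 1), b i * c (k - i) = w k) (n : ℕ) :
    ∑ i ∈ range (n + 1), (b i * y ^ i) * (c (n - i) * y ^ (n - i)) = w n * y ^ n := by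
  rw [← hw n, Finset.sum_mul]
  apply Finset.sum_congr rfl
  intro i hi
  have hik : i ≤ n := Nat.lt_succ_iff.mp (Finset.mem_range.mp hi)
  have hpow : y ^ i * y ^ (n - i) = y ^ n := by
    rw [← pow_add]; congr 1; omega
  calc (b i * y ^ i) * (c (n - i) * y ^ (n - i))
      = b i * c (n - i) * (y ^ i * y ^ (n - i)) := by ring
    _ = b i * c (n - i) * y ^ n := by rw [hpow]

include hy in
lemma prod_eq {b c w : ℕ → ℝ} (hb0 : ∀ m, 0 ≤ b m) (hc0 : ∀ m, 0 ≤ c m)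
    (hb : Summable (fun m => b m * y ^ m)) (hc : Summable (fun m => c m * y ^ m))
    (hw : ∀ k, ∑ i ∈ range (k + 1), b i * c (k - i) = w k) :
    (∑' m, b m * y ^ m) * (∑' m, c m * y ^ m) = ∑' n, w n * y ^ n := by
  have hbn := norm_summable hb (fun m => mul_nonneg (hb0 m) (pow_nonneg hy.le m))
  have hcn := norm_summable hc (fun m => mul_nonneg (hc0 m) (pow_nonneg hy.le m))
  rw [tsum_mul_tsum_eq_tsum_sum_range_of_summable_norm hbn hcn]
  exact tsum_congr (conv_eq hw)

include hy in
lemma summable_conv {b c w : ℕ → ℝ} (hb0 : ∀ m, 0 ≤ b m) (hc0 : ∀ m, 0 ≤ c m)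
    (hb : Summable (fun m => b m * y ^ m)) (hc : Summable (fun m => c m * y ^ m))
    (hw : ∀ k, ∑ i ∈ range (k + 1), b i * c (k - i) = w k) :
    Summable (fun n => w n * y ^ n) := by
  have hbn := norm_summable hb (fun m => mul_nonneg (hb0 m) (pow_nonneg hy.le m))
  have hcn := norm_summable hc (fun m => mul_nonneg (hc0 m) (pow_nonneg hy.le m))
  have h := (summable_norm_sum_mul_range_of_summable_norm hbn hcn).of_norm
  exact h.congr (conv_eq hw)

/-! ### The key coefficient inequality -/

lemma key_conv (n : ℕ) :
    (∑ i ∈ range (n + 1), pp i * pp (n - i)) ≤ ∑ i ∈ range (n + 2), qq i * rr (n + 1 - i) := by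
  have step1 : ∀ i ∈ range (n + 1),
      pp i * pp (n - i) ≤ (qq i * rr ((n - i) + 1) + qq (n - i) * rr (i + 1)) / 2 := by
    intro i _
    have := key_amgm i (n - i)
    linarith
  have h1 := Finset.sum_le_sum step1
  have hsplit : ∑ i ∈ range (n + 1), (qq i * rr ((n - i) + 1) + qq (n - i) * rr (i + 1)) / 2
      = ((∑ i ∈ range (n + 1), qq i * rr ((n - i) + 1)) +
         (∑ i ∈ range (n + 1), qq (n - i) * rr (i + 1))) / 2 := by
    rw [← Finset.sum_add_distrib, ← Finset.sum_div]
  have hrefl : ∑ i ∈ range (n + 1), qq (n - i) * rr (i + 1)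
      = ∑ i ∈ range (n + 1), qq i * rr ((n - i) + 1) := by
    have h := Finset.sum_range_reflect (fun i => qq i * rr ((n - i) + 1)) (n + 1)
    rw [← h]
    apply Finset.sum_congr rfl
    intro i hi
    have hik : i ≤ n := Nat.lt_succ_iff.mp (Finset.mem_range.mp hi)
    have e1 : n + 1 - 1 - i = n - i := by omega
    have e2 : n - (n - i) = i := by omega
    rw [e1, e2]
  have h2 : ∑ i ∈ range (n + 2), qq i * rr (n + 1 - i)
      = ∑ i ∈ range (n + 1), qq i * rr ((n - i) + 1) + qq (n + 1) * rr 0 := by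
    rw [Finset.sum_range_succ]
    congr 1
    · apply Finset.sum_congr rfl
      intro i hi
      have hik : i ≤ n := Nat.lt_succ_iff.mp (Finset.mem_range.mp hi)
      congr 2
      omega
    · rw [Nat.sub_self]
  have h3 : 0 ≤ qq (n + 1) * rr 0 := (mul_pos (qq_pos _) (rr_pos _)).le
  rw [hsplit, hrefl] at h1
  linarith

end Series

/-! ### Identification of the Bessel functions with our series -/

lemma besselI0_eq (x : ℝ) : besselI 0 x = ∑' m, a0 m * ((x / 2) ^ 2) ^ m := by
  unfold besselI
  apply tsum_congr
  intro m
  have hg : Real.Gamma ((m : ℝ) + 0 + 1) = F m := by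
    rw [show ((m : ℝ) + 0 + 1) = (m : ℝ) + 1 by ring, Real.Gamma_nat_eq_factorial]
    rfl
  have hexp : (x / 2 : ℝ) ^ (2 * (m : ℝ) + 0) = ((x / 2) ^ 2) ^ m := by
    rw [show (2 * (m : ℝ) + 0) = ((2 * m : ℕ) : ℝ) by push_cast; ring,
      Real.rpow_natCast, pow_mul]
  rw [hg, hexp]
  unfold a0 F
  ring

lemma besselI1_eq (x : ℝ) : besselI 1 x = (x / 2) * ∑' m, a1 m * ((x / 2) ^ 2) ^ m := by
  unfold besselI
  rw [← tsum_mul_left]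
  apply tsum_congr
  intro m
  have hg : Real.Gamma ((m : ℝ) + 1 + 1) = F (m + 1) := by
    rw [show ((m : ℝ) + 1 + 1) = ((m + 1 : ℕ) : ℝ) + 1 by push_cast; ring,
      Real.Gamma_nat_eq_factorial]
    rfl
  have hexp : (x / 2 : ℝ) ^ (2 * (m : ℝ) + 1) = ((x / 2) ^ 2) ^ m * (x / 2) := by
    rw [show (2 * (m : ℝ) + 1) = ((2 * m + 1 : ℕ) : ℝ) by push_cast; ring,
      Real.rpow_natCast, pow_succ, pow_mul]
  rw [hg, hexp]
  unfold a1 F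
  ring

lemma besselI2_eq (x : ℝ) :
    besselI 2 x = (x / 2) ^ 2 * ∑' m, a2 m * ((x / 2) ^ 2) ^ m := by
  unfold besselI
  rw [← tsum_mul_left]
  apply tsum_congr
  intro m
  have hg : Real.Gamma ((m : ℝ) + 2 + 1) = F (m + 2) := by
    rw [show ((m : ℝ) + 2 + 1) = ((m + 2 : ℕ) : ℝ) + 1 by push_cast; ring,
      Real.Gamma_nat_eq_factorial]
    rfl
  have hexp : (x / 2 : ℝ) ^ (2 * (m : ℝ) + 2) = ((x / 2) ^ 2) ^ m * ((x / 2) ^ 2) := by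
    rw [show (2 * (m : ℝ) + 2) = ((2 * (m + 1) : ℕ) : ℝ) by push_cast; ring,
      Real.rpow_natCast, pow_mul, pow_succ]
  rw [hg, hexp]
  unfold a2 F
  ring

/-! ### Coefficient recurrence -/

lemma a0_rec (m : ℕ) : a0 (m + 1) = a1 (m + 1) + a2 m := by
  unfold a0 a1 a2
  rw [show m + 1 + 1 = m + 2 from rfl, F_succ'' m, F_succ' m]
  have h0 := (F_pos m).ne'
  have h1 : ((m : ℝ) + 1) ≠ 0 := by positivity
  have h2 : ((m : ℝ) + 2) ≠ 0 := by positivity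
  field_simp
  ring

end Stmt6Aux

open Stmt6Aux Finset

set_option maxHeartbeats 2000000 in
theorem stmt_6 (x : ℝ) (hx : 0 < x) :
    2 < Real.log (1 - (2 / x) * psi 0 x) / Real.log (psi 0 x) ∧
    Real.log (1 - (2 / x) * psi 0 x) / Real.log (psi 0 x) < 4 := by
  have hy : (0:ℝ) < (x / 2) ^ 2 := by positivity
  set y : ℝ := (x / 2) ^ 2 with hy_def
  set E0 : ℝ := ∑' m, a0 m * y ^ m with hE0
  set E1 : ℝ := ∑' m, a1 m * y ^ m with hE1
  set E2 : ℝ := ∑' m, a2 m * y ^ m with hE2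
  have hs0 := summable_a0 hy
  have hs1 := summable_a1 hy
  have hs2 := summable_a2 hy
  have hE0pos : 0 < E0 := by
    rw [hE0]
    exact Summable.tsum_pos hs0 (fun m => (mul_pos (a0_pos m) (pow_pos hy m)).le) 0
      (mul_pos (a0_pos 0) (pow_pos hy 0))
  have hE1pos : 0 < E1 := by
    rw [hE1]
    exact Summable.tsum_pos hs1 (fun m => (mul_pos (a1_pos m) (pow_pos hy m)).le) 0
      (mul_pos (a1_pos 0) (pow_pos hy 0))
  have hE2pos : 0 < E2 := by
    rw [hE2]
    exact Summable.tsum_pos hs2 (fun m => (mul_pos (a2_pos m) (pow_pos hy m)).le) 0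
      (mul_pos (a2_pos 0) (pow_pos hy 0))
  have hI0 : besselI 0 x = E0 := by rw [hE0, hy_def]; exact besselI0_eq x
  have hI1 : besselI 1 x = (x / 2) * E1 := by rw [hE1, hy_def]; exact besselI1_eq x
  have hI2 : besselI 2 x = y * E2 := by rw [hE2, hy_def]; exact besselI2_eq x
  have hs0' : Summable (fun m => a0 (m + 1) * y ^ (m + 1)) :=
    (summable_nat_add_iff 1).2 hs0
  have hs1' : Summable (fun m => a1 (m + 1) * y ^ (m + 1)) :=
    (summable_nat_add_iff 1).2 hs1
  have hs2' : Summable (fun m => a2 m * y ^ (m + 1)) :=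
    (hs2.mul_left y).congr fun m => by ring
  have ha00 : a0 0 * y ^ 0 = 1 := by simp [a0, F]
  have ha10 : a1 0 * y ^ 0 = 1 := by simp [a1, F, Nat.factorial]
  -- the recurrence E0 = E1 + y * E2
  have hrec : E0 = E1 + y * E2 := by
    rw [hE0, hE1, Summable.tsum_eq_zero_add hs0, Summable.tsum_eq_zero_add hs1, ha00, ha10]
    have hyE2 : y * E2 = ∑' m, a2 m * y ^ (m + 1) := by
      rw [hE2, ← tsum_mul_left]
      exact tsum_congr fun m => by ring
    rw [hyE2]
    have hsplit : ∑' m, a0 (m + 1) * y ^ (m + 1)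
        = (∑' m, a1 (m + 1) * y ^ (m + 1)) + ∑' m, a2 m * y ^ (m + 1) := by
      rw [← Summable.tsum_add hs1' hs2']
      exact tsum_congr fun m => by rw [a0_rec m]; ring
    rw [hsplit]
    ring
  -- the bound (x/2) * E1 ≤ E0 - 1/2
  have hE1le : (x / 2) * E1 ≤ E0 - 1 / 2 := by
    have hterm : ∀ m, (x / 2) * (a1 m * y ^ m)
        ≤ (a0 m * y ^ m + a0 (m + 1) * y ^ (m + 1)) / 2 := by
      intro m
      have hu : 0 < a0 m * y ^ m := mul_pos (a0_pos m) (pow_pos hy m)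
      have hv : 0 < a0 (m + 1) * y ^ (m + 1) := mul_pos (a0_pos (m + 1)) (pow_pos hy (m + 1))
      have hb : 0 ≤ (x / 2) * (a1 m * y ^ m) :=
        mul_nonneg (by linarith) (mul_pos (a1_pos m) (pow_pos hy m)).le
      have hbsq : ((x / 2) * (a1 m * y ^ m)) ^ 2
          = (a0 m * y ^ m) * (a0 (m + 1) * y ^ (m + 1)) := by
        unfold a1 a0
        have h0 := (F_pos m).ne'
        have h1 := (F_pos (m + 1)).ne'
        rw [hy_def]
        field_simp
        ring
      nlinarith [sq_nonneg (a0 m * y ^ m - a0 (m + 1) * y ^ (m + 1))]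
    have hsum_rhs : Summable (fun m => (a0 m * y ^ m + a0 (m + 1) * y ^ (m + 1)) / 2) :=
      (hs0.add hs0').div_const 2
    have hle := Summable.tsum_le_tsum hterm (hs1.mul_left (x / 2)) hsum_rhs
    have hxE1 : (x / 2) * E1 = ∑' m, (x / 2) * (a1 m * y ^ m) := by
      rw [hE1, tsum_mul_left]
    have hshift : ∑' m, a0 (m + 1) * y ^ (m + 1) = E0 - 1 := by
      have h := Summable.tsum_eq_zero_add hs0
      rw [ha00, ← hE0] at h
      linarith
    have hrhs : ∑' m, (a0 m * y ^ m + a0 (m + 1) * y ^ (m + 1)) / 2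
        = (E0 + (E0 - 1)) / 2 := by
      have hh : (fun m => (a0 m * y ^ m + a0 (m + 1) * y ^ (m + 1)) / 2)
          = fun m => (a0 m * y ^ m + a0 (m + 1) * y ^ (m + 1)) * (1 / 2) :=
        funext fun m => by ring
      rw [hh, tsum_mul_right, Summable.tsum_add hs0 hs0', hshift, ← hE0]
      ring
    rw [← hxE1] at hle
    rw [hrhs] at hle
    linarith
  have hE1ltE0 : (x / 2) * E1 < E0 := lt_of_le_of_lt hE1le (by linarith)
  -- Cauchy products, level 1
  have hP11 : E1 * E1 = ∑' n, pp n * y ^ n := by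
    rw [hE1]
    exact prod_eq hy (fun m => (a1_pos m).le) (fun m => (a1_pos m).le) hs1 hs1 vander1
  have hP02 : E0 * E2 = ∑' n, qq n * y ^ n := by
    rw [hE0, hE2]
    exact prod_eq hy (fun m => (a0_pos m).le) (fun m => (a2_pos m).le) hs0 hs2 vander2
  have hP00 : E0 * E0 = ∑' n, rr n * y ^ n := by
    rw [hE0]
    exact prod_eq hy (fun m => (a0_pos m).le) (fun m => (a0_pos m).le) hs0 hs0 vander3
  have hsp : Summable (fun n => pp n * y ^ n) :=
    summable_conv hy (fun m => (a1_pos m).le) (fun m => (a1_pos m).le) hs1 hs1 vander1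
  have hsq : Summable (fun n => qq n * y ^ n) :=
    summable_conv hy (fun m => (a0_pos m).le) (fun m => (a2_pos m).le) hs0 hs2 vander2
  have hsr : Summable (fun n => rr n * y ^ n) :=
    summable_conv hy (fun m => (a0_pos m).le) (fun m => (a0_pos m).le) hs0 hs0 vander3
  -- claim A : E0 * E2 < E1 * E1
  have hA : E0 * E2 < E1 * E1 := by
    rw [hP02, hP11]
    have hle : ∀ n, qq n * y ^ n ≤ pp n * y ^ n := by
      intro n
      apply mul_le_mul_of_nonneg_right _ (pow_nonneg hy.le n)
      rw [qq_eq n]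
      apply mul_le_of_le_one_right (pp_pos n).le
      rw [div_le_one (by positivity)]
      linarith
    have h0 : qq 0 * y ^ 0 < pp 0 * y ^ 0 := by
      apply mul_lt_mul_of_pos_right _ (pow_pos hy 0)
      rw [qq_eq 0]
      nlinarith [pp_pos 0]
    exact Summable.tsum_lt_tsum hle h0 hsq hsp
  -- Cauchy products, level 2
  have hPpp : (∑' n, pp n * y ^ n) * (∑' n, pp n * y ^ n)
      = ∑' n, (∑ i ∈ range (n + 1), pp i * pp (n - i)) * y ^ n :=
    prod_eq hy (fun m => (pp_pos m).le) (fun m => (pp_pos m).le) hsp hsp (fun k => rfl)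
  have hPqr : (∑' n, qq n * y ^ n) * (∑' n, rr n * y ^ n)
      = ∑' n, (∑ i ∈ range (n + 1), qq i * rr (n - i)) * y ^ n :=
    prod_eq hy (fun m => (qq_pos m).le) (fun m => (rr_pos m).le) hsq hsr (fun k => rfl)
  have hspp : Summable (fun n => (∑ i ∈ range (n + 1), pp i * pp (n - i)) * y ^ n) :=
    summable_conv hy (fun m => (pp_pos m).le) (fun m => (pp_pos m).le) hsp hsp (fun k => rfl)
  have hsqr : Summable (fun n => (∑ i ∈ range (n + 1), qq i * rr (n - i)) * y ^ n) :=
    summable_conv hy (fun m => (qq_pos m).le) (fun m => (rr_pos m).le) hsq hsr (fun k => rfl)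
  -- claim B : y * (Tp * Tp) < Tq * Tr
  have hB : y * ((∑' n, pp n * y ^ n) * (∑' n, pp n * y ^ n))
      < (∑' n, qq n * y ^ n) * (∑' n, rr n * y ^ n) := by
    rw [hPpp, hPqr]
    have hyL : y * (∑' n, (∑ i ∈ range (n + 1), pp i * pp (n - i)) * y ^ n)
        = ∑' n, (∑ i ∈ range (n + 1), pp i * pp (n - i)) * y ^ (n + 1) := by
      rw [← tsum_mul_left]
      exact tsum_congr fun n => by ring
    have hsL : Summable (fun n => (∑ i ∈ range (n + 1), pp i * pp (n - i)) * y ^ (n + 1)) :=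
      (hspp.mul_left y).congr fun n => by ring
    have hsR : Summable (fun n =>
        (∑ i ∈ range (n + 1 + 1), qq i * rr (n + 1 - i)) * y ^ (n + 1)) :=
      (summable_nat_add_iff 1).2 hsqr
    have h1 : ∑' n, (∑ i ∈ range (n + 1), pp i * pp (n - i)) * y ^ (n + 1)
        ≤ ∑' n, (∑ i ∈ range (n + 1 + 1), qq i * rr (n + 1 - i)) * y ^ (n + 1) := by
      apply Summable.tsum_le_tsum _ hsL hsR
      intro n
      exact mul_le_mul_of_nonneg_right (key_conv n) (pow_nonneg hy.le _)
    have h2 : (∑' n, (∑ i ∈ range (n + 1), qq i * rr (n - i)) * y ^ n)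
        = (∑ i ∈ range (0 + 1), qq i * rr (0 - i)) * y ^ 0
          + ∑' n, (∑ i ∈ range (n + 1 + 1), qq i * rr (n + 1 - i)) * y ^ (n + 1) :=
      Summable.tsum_eq_zero_add hsqr
    have h3 : 0 < (∑ i ∈ range (0 + 1), qq i * rr (0 - i)) * y ^ 0 := by
      rw [Finset.sum_range_one]
      exact mul_pos (mul_pos (qq_pos 0) (rr_pos 0)) (pow_pos hy 0)
    calc y * (∑' n, (∑ i ∈ range (n + 1), pp i * pp (n - i)) * y ^ n)
        = ∑' n, (∑ i ∈ range (n + 1), pp i * pp (n - i)) * y ^ (n + 1) := hyL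
      _ ≤ ∑' n, (∑ i ∈ range (n + 1 + 1), qq i * rr (n + 1 - i)) * y ^ (n + 1) := h1
      _ < ∑' n, (∑ i ∈ range (n + 1), qq i * rr (n - i)) * y ^ n := by
          rw [h2]
          linarith
  -- Bessel-level facts
  have hI0pos : 0 < besselI 0 x := by rw [hI0]; exact hE0pos
  have hI1pos : 0 < besselI 1 x := by rw [hI1]; exact mul_pos (by linarith) hE1pos
  have hI2pos : 0 < besselI 2 x := by rw [hI2]; exact mul_pos hy hE2pos
  have hpsi : psi 0 x = besselI 1 x / besselI 0 x := by unfold psi; norm_num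
  have ht0 : 0 < psi 0 x := by rw [hpsi]; exact div_pos hI1pos hI0pos
  have ht1 : psi 0 x < 1 := by
    rw [hpsi, div_lt_one hI0pos, hI1, hI0]
    exact hE1ltE0
  have hlogt : Real.log (psi 0 x) < 0 := Real.log_neg ht0 ht1
  have hx' : x ≠ 0 := ne_of_gt hx
  have hrecI : besselI 0 x = (2 / x) * besselI 1 x + besselI 2 x := by
    rw [hI0, hI1, hI2, hrec]
    field_simp
  have haeq : 1 - (2 / x) * psi 0 x = besselI 2 x / besselI 0 x := by
    have hXI : x * besselI 0 x - 2 * besselI 1 x = x * besselI 2 x := by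
      rw [hrecI]
      field_simp
      ring
    rw [hpsi]
    have hI0ne := ne_of_gt hI0pos
    field_simp
    linear_combination hXI
  have ha0 : 0 < 1 - (2 / x) * psi 0 x := by
    rw [haeq]; exact div_pos hI2pos hI0pos
  have hAB1 : besselI 2 x * besselI 0 x < besselI 1 x * besselI 1 x := by
    rw [hI0, hI1, hI2]
    calc (y * E2) * E0 = y * (E0 * E2) := by ring
      _ < y * (E1 * E1) := mul_lt_mul_of_pos_left hA hy
      _ = (x / 2 * E1) * (x / 2 * E1) := by rw [hy_def]; ring
  have hAB2 : (besselI 1 x) ^ 4 < besselI 2 x * (besselI 0 x) ^ 3 := by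
    rw [hI0, hI1, hI2]
    have hL : ((x / 2) * E1) ^ 4
        = y * (y * ((∑' n, pp n * y ^ n) * (∑' n, pp n * y ^ n))) := by
      rw [← hP11, hy_def]; ring
    have hR : y * E2 * E0 ^ 3
        = y * ((∑' n, qq n * y ^ n) * (∑' n, rr n * y ^ n)) := by
      rw [← hP02, ← hP00]; ring
    rw [hL, hR]
    exact mul_lt_mul_of_pos_left hB hy
  constructor
  · rw [lt_div_iff_of_neg hlogt]
    have h2log : (2:ℝ) * Real.log (psi 0 x) = Real.log ((psi 0 x) ^ 2) := by
      rw [Real.log_pow]; norm_num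
    rw [h2log]
    apply Real.log_lt_log ha0
    rw [haeq, hpsi, div_pow, div_lt_div_iff₀ hI0pos (by positivity)]
    nlinarith [hAB1, hI0pos]
  · rw [div_lt_iff_of_neg hlogt]
    have h4log : (4:ℝ) * Real.log (psi 0 x) = Real.log ((psi 0 x) ^ 4) := by
      rw [Real.log_pow]; norm_num
    rw [h4log]
    apply Real.log_lt_log (by positivity)
    rw [haeq, hpsi, div_pow, div_lt_div_iff₀ (by positivity) hI0pos]
    nlinarith [mul_lt_mul_of_pos_right hAB2 hI0pos, hI0pos]
end

section
/- The function λ(x) = log(1 − (2/x)·Ψ(x)) / log Ψ(x), where Ψ(x) = I₁(x)/I₀(x), satisfies lim_{x→0⁺} λ(x) = 2. -/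
open Real Filter Topology

lemma besselI_nat_eq (n : ℕ) (x : ℝ) :
    besselI n x = ∑' m : ℕ, (x / 2) ^ (2 * m + n) / ((m.factorial : ℝ) * (m + n).factorial) := by
  unfold besselI
  congr 1; funext m
  rw [show (2 * (m:ℝ) + n) = ((2*m+n : ℕ):ℝ) by push_cast; ring, Real.rpow_natCast]
  congr 2
  rw [show ((m:ℝ) + n + 1) = ((m+n:ℕ):ℝ) + 1 by push_cast; ring, Real.Gamma_nat_eq_factorial]

lemma summable_bessel (n : ℕ) {x : ℝ} (hx : 0 < x) :
    Summable (fun m : ℕ => (x / 2) ^ (2 * m + n) / ((m.factorial : ℝ) * (m + n).factorial)) := by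
  have h2 : Summable (fun m : ℕ => (x/2)^n * (((x/2)^2) ^ m / (m.factorial : ℝ))) :=
    (Real.summable_pow_div_factorial ((x/2)^2)).mul_left _
  refine Summable.of_nonneg_of_le (fun m => by positivity) (fun m => ?_) h2
  rw [pow_add, pow_mul,
    show (x/2)^n * (((x/2)^2)^m / (m.factorial:ℝ)) = ((x/2)^2)^m * (x/2)^n / ((m.factorial:ℝ)*1) by ring]
  gcongr
  exact_mod_cast Nat.one_le_iff_ne_zero.2 (Nat.factorial_ne_zero _)

lemma besselI_pos (n : ℕ) {x : ℝ} (hx : 0 < x) : 0 < besselI n x := by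
  rw [besselI_nat_eq]
  refine Summable.tsum_pos (summable_bessel n hx) (fun m => by positivity) 0 ?_
  positivity

lemma besselI_eq_add (n : ℕ) {x : ℝ} (hx : 0 < x) :
    besselI n x = (x/2)^n / n.factorial +
      ∑' m : ℕ, (x / 2) ^ (2 * (m+1) + n) / (((m+1).factorial : ℝ) * (m + 1 + n).factorial) := by
  rw [besselI_nat_eq, Summable.tsum_eq_zero_add (summable_bessel n hx)]
  norm_num

lemma tail_nonneg (n : ℕ) {x : ℝ} (hx : 0 < x) :
    0 ≤ ∑' m : ℕ, (x / 2) ^ (2 * (m+1) + n) / (((m+1).factorial : ℝ) * (m + 1 + n).factorial) :=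
  tsum_nonneg (fun m => by positivity)

noncomputable def Cst : ℝ := ∑' m : ℕ, (1 : ℝ) / ((m+1).factorial : ℝ)

lemma summable_cst : Summable (fun m : ℕ => (1 : ℝ) / ((m+1).factorial : ℝ)) := by
  have := (Real.summable_pow_div_factorial 1).comp_injective (add_left_injective 1)
  simpa [Function.comp_def] using this

lemma tail_le (n : ℕ) {x : ℝ} (hx : 0 < x) (hx2 : x ≤ 2) :
    ∑' m : ℕ, (x / 2) ^ (2 * (m+1) + n) / (((m+1).factorial : ℝ) * (m + 1 + n).factorial)
      ≤ (x/2)^(n+2) * Cst := by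
  rw [Cst, mul_comm, ← tsum_mul_right]
  refine Summable.tsum_le_tsum (fun m => ?_) ((summable_bessel n hx).comp_injective (add_left_injective 1)) (summable_cst.mul_right _)
  have h1 : (0:ℝ) ≤ x/2 := by linarith
  have h2 : x/2 ≤ 1 := by linarith
  calc (x / 2) ^ (2 * (m+1) + n) / (((m+1).factorial : ℝ) * (m + 1 + n).factorial)
      ≤ (x/2)^(n+2) / (((m+1).factorial : ℝ) * 1) := by
        refine div_le_div₀ (by positivity) (pow_le_pow_of_le_one h1 h2 (by omega)) (by positivity) ?_
        have : (1:ℝ) ≤ ((m + 1 + n).factorial : ℝ) :=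
          by exact_mod_cast Nat.one_le_iff_ne_zero.2 (Nat.factorial_ne_zero _)
        have h3 : (0:ℝ) < ((m+1).factorial : ℝ) := by positivity
        nlinarith
    _ = 1 / ((m+1).factorial : ℝ) * (x/2)^(n+2) := by ring

lemma besselI_div_tendsto (n : ℕ) :
    Tendsto (fun x => besselI n x / x ^ n) (𝓝[>](0:ℝ))
      (𝓝 (1 / (2^n * (n.factorial : ℝ)))) := by
  have hupper : Tendsto (fun x : ℝ => 1 / (2^n * (n.factorial : ℝ)) + x^2 * Cst / 2^(n+2))
      (𝓝[>](0:ℝ)) (𝓝 (1 / (2^n * (n.factorial : ℝ)))) := by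
    have : Continuous (fun x : ℝ => 1 / (2^n * (n.factorial : ℝ)) + x^2 * Cst / 2^(n+2)) := by
      continuity
    have h := (this.tendsto 0).mono_left (nhdsWithin_le_nhds (s := Set.Ioi (0:ℝ)))
    simpa using h
  refine tendsto_of_tendsto_of_tendsto_of_le_of_le' tendsto_const_nhds hupper ?_ ?_
  · filter_upwards [self_mem_nhdsWithin] with x (hx : 0 < x)
    rw [besselI_eq_add n hx, le_div_iff₀ (by positivity)]
    have h1 : (x/2)^n / (n.factorial : ℝ) = 1 / (2^n * (n.factorial : ℝ)) * x^n := by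
      rw [div_pow]; field_simp
    nlinarith [tail_nonneg n hx]
  · filter_upwards [Ioo_mem_nhdsGT_of_mem (Set.mem_Ico.2 ⟨le_refl (0:ℝ), two_pos⟩)]
      with x hx
    obtain ⟨hx0, hx2⟩ := hx
    rw [besselI_eq_add n hx0, div_le_iff₀ (by positivity)]
    have h1 : (x/2)^n / (n.factorial : ℝ) = 1 / (2^n * (n.factorial : ℝ)) * x^n := by
      rw [div_pow]; field_simp
    have h2 := tail_le n hx0 hx2.le
    have h3 : (x/2)^(n+2) * Cst = x^2 * Cst / 2^(n+2) * x^n := by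
      rw [div_pow]; field_simp; rw [pow_add]; ring
    nlinarith [pow_pos hx0 n]

lemma bessel_identity {x : ℝ} (hx : 0 < x) :
    besselI 0 x - (2/x) * besselI 1 x = besselI 2 x := by
  have hx2 : x / 2 ≠ 0 := by positivity
  have hS0 := summable_bessel 0 hx
  have hS1 := summable_bessel 1 hx
  have hS2 := summable_bessel 2 hx
  have b0 := besselI_nat_eq 0 x
  have b1 := besselI_nat_eq 1 x
  have b2 := besselI_nat_eq 2 x
  simp only [Nat.cast_zero, Nat.cast_one, Nat.cast_ofNat] at b0 b1 b2
  rw [b0, b1, b2, ← tsum_mul_left,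
    ← Summable.tsum_sub hS0 (hS1.mul_left _)]
  set h : ℕ → ℝ := fun m =>
    (x / 2) ^ (2 * m + 0) / ((m.factorial : ℝ) * (m + 0).factorial)
      - 2 / x * ((x / 2) ^ (2 * m + 1) / ((m.factorial : ℝ) * (m + 1).factorial)) with hh
  have hsum : Summable h := hS0.sub (hS1.mul_left _)
  rw [Summable.tsum_eq_zero_add hsum]
  have h0 : h 0 = 0 := by
    simp only [hh]
    norm_num
    field_simp
    norm_num
  rw [h0, zero_add]
  apply tsum_congr
  intro m
  simp only [hh]
  have e1 : (2:ℝ) / x * (x/2) ^ (2 * (m+1) + 1) = (x/2) ^ (2 * (m+1)) := by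
    rw [pow_succ]
    field_simp
  have e2 : (2 * (m+1) : ℕ) = 2 * m + 2 := by omega
  rw [← mul_div_assoc, e1]
  rw [show (m + 1 + 0 : ℕ) = m + 1 by omega, show (m + 1 + 1 : ℕ) = m + 2 by omega,
    show (2 * (m+1) + 0 : ℕ) = 2*m+2 by omega, e2]
  have f1 : ((m+1).factorial : ℝ) = (m+1) * m.factorial := by exact_mod_cast Nat.factorial_succ m
  have f2 : ((m+2).factorial : ℝ) = (m+2) * (m+1).factorial := by
    exact_mod_cast Nat.factorial_succ (m+1)
  have hm : (0:ℝ) < m.factorial := by positivity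
  rw [f1, f2, f1]
  field_simp
  ring

lemma ratio_limit {a b : ℝ → ℝ} {A B : ℝ}
    (ha : Tendsto a (𝓝[>](0:ℝ)) (𝓝 A)) (hb : Tendsto b (𝓝[>](0:ℝ)) (𝓝 B)) :
    Tendsto (fun x => (2 * Real.log x + a x) / (Real.log x + b x)) (𝓝[>](0:ℝ)) (𝓝 2) := by
  have hlog : Tendsto Real.log (𝓝[>](0:ℝ)) atBot := Real.tendsto_log_nhdsGT_zero
  have hinv : Tendsto (fun x : ℝ => (Real.log x)⁻¹) (𝓝[>](0:ℝ)) (𝓝 0) := by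
    have h1 : Tendsto (fun x : ℝ => -Real.log x) (𝓝[>](0:ℝ)) atTop := tendsto_neg_atTop_iff.2 hlog
    have h2 := h1.inv_tendsto_atTop
    have h3 := h2.neg
    simp only [Pi.inv_apply, inv_neg, neg_neg, neg_zero] at h3
    exact h3
  have hnum : Tendsto (fun x => 2 + a x * (Real.log x)⁻¹) (𝓝[>](0:ℝ)) (𝓝 2) := by
    have := tendsto_const_nhds (f := 𝓝[>](0:ℝ)) (x := (2:ℝ)) |>.add (ha.mul hinv)
    simpa using this
  have hden : Tendsto (fun x => 1 + b x * (Real.log x)⁻¹) (𝓝[>](0:ℝ)) (𝓝 1) := by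
    have := tendsto_const_nhds (f := 𝓝[>](0:ℝ)) (x := (1:ℝ)) |>.add (hb.mul hinv)
    simpa using this
  have hdiv := hnum.div hden one_ne_zero
  norm_num at hdiv
  refine hdiv.congr' ?_
  have hev : ∀ᶠ x in 𝓝[>](0:ℝ), Real.log x < 0 := hlog.eventually (eventually_lt_atBot 0)
  filter_upwards [hev] with x hx
  have hu : Real.log x ≠ 0 := ne_of_lt hx
  simp only [Pi.div_apply]
  rw [show (2 + a x * (Real.log x)⁻¹) = (2 * Real.log x + a x) * (Real.log x)⁻¹ by
        field_simp,
      show (1 + b x * (Real.log x)⁻¹) = (Real.log x + b x) * (Real.log x)⁻¹ by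
        field_simp,
      mul_div_mul_right _ _ (inv_ne_zero hu)]

theorem stmt_7 :
    Filter.Tendsto (fun x : ℝ => Real.log (1 - (2 / x) * psi 0 x) / Real.log (psi 0 x))
      (nhdsWithin 0 (Set.Ioi 0)) (nhds 2) := by
  have h2 := besselI_div_tendsto 2
  have h1 := besselI_div_tendsto 1
  have h0 := besselI_div_tendsto 0
  norm_num at h2 h1 h0
  have la : Tendsto (fun x => Real.log (besselI 2 x / x^2) - Real.log (besselI 0 x))
      (𝓝[>](0:ℝ)) (𝓝 (Real.log (1/8) - Real.log 1)) := by
    exact ((Real.continuousAt_log (by norm_num)).tendsto.comp h2).sub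
      ((Real.continuousAt_log (by norm_num)).tendsto.comp h0)
  have lb : Tendsto (fun x => Real.log (besselI 1 x / x) - Real.log (besselI 0 x))
      (𝓝[>](0:ℝ)) (𝓝 (Real.log (1/2) - Real.log 1)) := by
    exact ((Real.continuousAt_log (by norm_num)).tendsto.comp h1).sub
      ((Real.continuousAt_log (by norm_num)).tendsto.comp h0)
  refine (ratio_limit la lb).congr' ?_
  filter_upwards [self_mem_nhdsWithin] with x (hx : 0 < x)
  have hxne : x ≠ 0 := ne_of_gt hx
  have I0 := besselI_pos 0 hx
  have I1 := besselI_pos 1 hx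
  have I2 := besselI_pos 2 hx
  norm_num at I0 I1 I2
  have hpsi : psi 0 x = besselI 1 x / besselI 0 x := by unfold psi; norm_num
  have harg : 1 - (2 / x) * psi 0 x = besselI 2 x / besselI 0 x := by
    rw [hpsi, ← bessel_identity hx]
    field_simp
  have hnum : Real.log (1 - (2 / x) * psi 0 x)
      = 2 * Real.log x + (Real.log (besselI 2 x / x^2) - Real.log (besselI 0 x)) := by
    rw [harg, Real.log_div (ne_of_gt I2) (ne_of_gt I0),
      Real.log_div (ne_of_gt I2) (by positivity), Real.log_pow]
    push_cast
    ring
  have hden : Real.log (psi 0 x)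
      = Real.log x + (Real.log (besselI 1 x / x) - Real.log (besselI 0 x)) := by
    rw [hpsi, Real.log_div (ne_of_gt I1) (ne_of_gt I0),
      Real.log_div (ne_of_gt I1) hxne]
    ring
  rw [hnum, hden]
end
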